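/- arXiv:1808.05944 — 8 statements merged into one kernel-verified Lean document; each statement's English description precedes it below -/
import Mathlib

section
/- Let M_n = 2·(2n)!·3^n / ((n+2)!·n!) be the number of rooted planar maps with n edges (Tutte's formula). Then M_n ~ (2/√π)·n^{-5/2}·12^n as n → ∞; that is, the sequence M_n · n^{5/2} / 12^n converges to 2/√π. -/
open Filter Real Topology

private lemma tutte_eq (n : ℕ) (hn : 1 ≤ n) :
    (2 * (Nat.factorial (2 * n) : ℝ) * 3 ^ n /
        ((Nat.factorial (n + 2) : ℝ) * (Nat.factorial n : ℝ))) *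
      (n : ℝ) ^ (5 / 2 : ℝ) / 12 ^ n
    = 2 * (Stirling.stirlingSeq (2 * n) / Stirling.stirlingSeq n ^ 2) *
        ((n : ℝ) ^ 2 / (((n : ℝ) + 1) * ((n : ℝ) + 2))) := by
  have hn0 : (0:ℝ) < n := by exact_mod_cast hn
  have hs : (0:ℝ) < √n := Real.sqrt_pos.mpr hn0
  have h52 : (n:ℝ) ^ (5/2:ℝ) = (n:ℝ) ^ (2:ℕ) * √n := by
    rw [Real.sqrt_eq_rpow, ← Real.rpow_natCast _ 2, ← Real.rpow_add hn0]
    norm_num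
  have hfac : (Nat.factorial (n + 2) : ℝ) = ((n:ℝ)+2) * ((n:ℝ)+1) * Nat.factorial n := by
    rw [Nat.factorial_succ, Nat.factorial_succ]; push_cast; ring
  have h4 : √(2 * (2*(n:ℝ))) = 2 * √n := by
    rw [show 2 * (2*(n:ℝ)) = 2^2 * n by ring, Real.sqrt_mul (by positivity),
      Real.sqrt_sq (by norm_num)]
  have he : Real.exp 1 ≠ 0 := Real.exp_ne_zero 1
  have hfn : (Nat.factorial n : ℝ) ≠ 0 := by positivity
  rw [Stirling.stirlingSeq, Stirling.stirlingSeq]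
  push_cast
  rw [h52, hfac, h4]
  have h2n : ((2*(n:ℝ))/Real.exp 1) ^ (2*n) = 4^n * ((n:ℝ)/Real.exp 1)^(2*n) := by
    rw [div_pow, div_pow, show ((2:ℝ)*n)^(2*n) = 4^n * (n:ℝ)^(2*n) by
      rw [mul_pow, show (2:ℝ)^(2*n) = 4^n by rw [pow_mul]; norm_num]]
    ring
  rw [h2n]
  have hpow : ((n:ℝ)/Real.exp 1)^(2*n) = (((n:ℝ)/Real.exp 1)^n)^2 := by
    rw [← pow_mul, mul_comm]
  rw [hpow]
  have hp : ((n:ℝ)/Real.exp 1)^n ≠ 0 := by positivity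
  have h12 : (12:ℝ)^n = 4^n * 3^n := by rw [← mul_pow]; norm_num
  rw [h12]
  field_simp
  ring_nf
  rw [Real.sq_sqrt hn0.le, Real.sq_sqrt (by positivity : (0:ℝ) ≤ (n:ℝ) * 2)]

/-- Tutte's formula: the number `M_n = 2·(2n)!·3^n / ((n+2)!·n!)` of rooted planar maps
with `n` edges satisfies `M_n ~ (2/√π)·n^{-5/2}·12^n`, i.e.
`M_n · n^{5/2} / 12^n → 2/√π`. -/
theorem tutte_asymptotics :
    Tendsto
      (fun n : ℕ =>
        (2 * (Nat.factorial (2 * n) : ℝ) * 3 ^ n /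
            ((Nat.factorial (n + 2) : ℝ) * (Nat.factorial n : ℝ))) *
          (n : ℝ) ^ (5 / 2 : ℝ) / 12 ^ n)
      atTop (nhds (2 / Real.sqrt π)) := by
  have hπ : √π ≠ 0 := by positivity
  have h2 : Tendsto (fun n : ℕ => Stirling.stirlingSeq (2 * n)) atTop (𝓝 (√π)) :=
    Stirling.tendsto_stirlingSeq_sqrt_pi.comp (tendsto_id.const_mul_atTop' two_pos)
  have hq : Tendsto (fun n : ℕ => (n : ℝ) ^ 2 / (((n : ℝ) + 1) * ((n : ℝ) + 2)))
      atTop (𝓝 1) := by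
    have := (tendsto_natCast_div_add_atTop (1 : ℝ)).mul (tendsto_natCast_div_add_atTop (2 : ℝ))
    rw [mul_one] at this
    refine this.congr fun n => ?_
    rw [div_mul_div_comm]
    ring_nf
  have hmain : Tendsto (fun n : ℕ =>
      2 * (Stirling.stirlingSeq (2 * n) / Stirling.stirlingSeq n ^ 2) *
        ((n : ℝ) ^ 2 / (((n : ℝ) + 1) * ((n : ℝ) + 2)))) atTop (𝓝 (2 / √π)) := by
    have : 2 * (√π / √π ^ 2) * 1 = (2 : ℝ) / √π := by
      rw [mul_one, sq, div_mul_cancel_left₀ hπ, ← div_eq_mul_inv]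
    rw [← this]
    exact ((tendsto_const_nhds.mul (h2.div
      (Stirling.tendsto_stirlingSeq_sqrt_pi.pow 2) (pow_ne_zero 2 hπ))).mul hq)
  refine hmain.congr' ?_
  filter_upwards [eventually_ge_atTop 1] with n hn
  exact (tutte_eq n hn).symm
end

section
/- Let D be a set of even positive integers such that the index set I = {i ∈ ℕ : 2i ∈ D} is infinite, and define H(x) = Σ_{i ∈ I} (i−1)·C(2i−1, i)·x^i for x ≥ 0. Then for every x with 0 ≤ x < 1/4 the family i ↦ (i−1)·C(2i−1, i)·x^i (i ∈ I) is summable, and H(x) tends to +∞ as x → 1/4 from the left. -/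
open Filter Real

/-- For `x ≥ 0`, `H D x = Σ_{i : 1 ≤ i, 2i ∈ D} (i−1)·C(2i−1,i)·x^i`. -/
noncomputable def Hseries (D : Set ℕ) (x : ℝ) : ℝ :=
  ∑' i : {i : ℕ // 1 ≤ i ∧ 2 * i ∈ D},
    (((i : ℕ) : ℝ) - 1) * (Nat.choose (2 * (i : ℕ) - 1) (i : ℕ) : ℝ) * x ^ (i : ℕ)

lemma aux_choose_le (n : ℕ) : Nat.choose (2 * n - 1) n ≤ 4 ^ n := by
  cases n with
  | zero => decide
  | succ k =>
    have h1 : 2 * (k + 1) - 1 = 2 * k + 1 := by omega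
    rw [h1]
    have h2 : Nat.choose (2 * k + 1) (k + 1) = Nat.choose (2 * k + 1) k := by
      have := Nat.choose_symm (show k ≤ 2 * k + 1 by omega)
      have h3 : 2 * k + 1 - k = k + 1 := by omega
      rw [h3] at this
      exact this
    rw [h2]
    calc Nat.choose (2 * k + 1) k ≤ 4 ^ k := Nat.choose_middle_le_pow k
      _ ≤ 4 ^ (k + 1) := Nat.pow_le_pow_right (by norm_num) (by omega)

lemma aux_central (k : ℕ) : Nat.centralBinom (k + 1) = 2 * Nat.choose (2 * (k + 1) - 1) (k + 1) := by
  have h1 : 2 * (k + 1) - 1 = 2 * k + 1 := by omega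
  rw [h1]
  unfold Nat.centralBinom
  have h2 : 2 * (k + 1) = (2 * k + 1) + 1 := by omega
  rw [h2, Nat.choose_succ_succ]
  have h3 : Nat.choose (2 * k + 1) k = Nat.choose (2 * k + 1) (k + 1) := by
    have := Nat.choose_symm (show k ≤ 2 * k + 1 by omega)
    have h4 : 2 * k + 1 - k = k + 1 := by omega
    rw [h4] at this
    exact this.symm
  rw [h3]; ring

lemma aux_low_nat (n : ℕ) (hn : 3 ≤ n) : 4 ^ n ≤ 7 * (n - 1) * Nat.choose (2 * n - 1) n := by
  obtain ⟨k, rfl⟩ : ∃ k, n = k + 1 := ⟨n - 1, by omega⟩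
  have h := Nat.four_pow_le_two_mul_self_mul_centralBinom (k + 1) (by omega)
  rw [aux_central k] at h
  calc 4 ^ (k + 1) ≤ 2 * (k + 1) * (2 * Nat.choose (2 * (k + 1) - 1) (k + 1)) := h
    _ = (4 * (k + 1)) * Nat.choose (2 * (k + 1) - 1) (k + 1) := by ring
    _ ≤ (7 * (k + 1 - 1)) * Nat.choose (2 * (k + 1) - 1) (k + 1) :=
        Nat.mul_le_mul_right _ (by omega)

lemma aux_low (n : ℕ) (hn : 3 ≤ n) :
    (1 / 7 : ℝ) ≤ ((n : ℝ) - 1) * (Nat.choose (2 * n - 1) n : ℝ) * (1 / 4 : ℝ) ^ n := by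
  have h := aux_low_nat n hn
  have hcast : ((4 : ℝ)) ^ n ≤ 7 * ((n : ℝ) - 1) * (Nat.choose (2 * n - 1) n : ℝ) := by
    have := (Nat.cast_le (α := ℝ)).mpr h
    push_cast [Nat.cast_sub (show 1 ≤ n by omega)] at this
    convert this using 2
  have h4 : (0 : ℝ) < 4 ^ n := by positivity
  have heq : ((n : ℝ) - 1) * (Nat.choose (2 * n - 1) n : ℝ) * (1 / 4 : ℝ) ^ n
      = (((n : ℝ) - 1) * (Nat.choose (2 * n - 1) n : ℝ)) / 4 ^ n := by
    rw [one_div, inv_pow, div_eq_mul_inv]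
  rw [heq, le_div_iff₀ h4]
  nlinarith

/-- If `D` is a set of even positive integers with infinite index set
`I = {i : 2i ∈ D}`, then for `0 ≤ x < 1/4` the family defining `H(x)` is summable, and
`H(x) → +∞` as `x → 1/4⁻`. -/
theorem Hseries_summable_and_tendsto_atTop (D : Set ℕ)
    (hD : ∀ d ∈ D, Even d ∧ 0 < d)
    (hinf : {i : ℕ | 1 ≤ i ∧ 2 * i ∈ D}.Infinite) :
    (∀ x : ℝ, 0 ≤ x → x < 1 / 4 →
        Summable (fun i : {i : ℕ // 1 ≤ i ∧ 2 * i ∈ D} =>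
          (((i : ℕ) : ℝ) - 1) * (Nat.choose (2 * (i : ℕ) - 1) (i : ℕ) : ℝ) * x ^ (i : ℕ))) ∧
      Tendsto (Hseries D) (nhdsWithin (1 / 4) (Set.Iio (1 / 4))) atTop := by
  set P : Set ℕ := {i : ℕ | 1 ≤ i ∧ 2 * i ∈ D} with hP
  have key : ∀ x : ℝ, 0 ≤ x → x < 1 / 4 →
      Summable (fun n : ℕ => ((n : ℝ) - 1) * (Nat.choose (2 * n - 1) n : ℝ) * x ^ n) := by
    intro x hx0 hx4
    have hr : ‖4 * x‖ < 1 := by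
      rw [Real.norm_eq_abs, abs_of_nonneg (by linarith)]; linarith
    have hmaj : Summable (fun n : ℕ => ((n : ℝ) + 1) * (4 * x) ^ n) := by
      have h1 := summable_pow_mul_geometric_of_norm_lt_one (R := ℝ) 1 hr
      have h2 := summable_geometric_of_norm_lt_one hr
      have := h1.add h2
      refine this.congr fun n => ?_
      simp [pow_one, add_mul]
    refine Summable.of_norm_bounded hmaj fun n => ?_
    have hxn : (0 : ℝ) ≤ x ^ n := pow_nonneg hx0 n
    have habs : |(n : ℝ) - 1| ≤ (n : ℝ) + 1 := by
      rw [abs_le]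
      constructor <;> nlinarith [Nat.cast_nonneg (α := ℝ) n]
    have hC : (Nat.choose (2 * n - 1) n : ℝ) ≤ 4 ^ n := by
      exact_mod_cast (Nat.cast_le (α := ℝ)).mpr (aux_choose_le n)
    calc ‖((n : ℝ) - 1) * (Nat.choose (2 * n - 1) n : ℝ) * x ^ n‖
        = |(n : ℝ) - 1| * (Nat.choose (2 * n - 1) n : ℝ) * x ^ n := by
          rw [norm_mul, norm_mul, Real.norm_eq_abs, Real.norm_eq_abs, Real.norm_eq_abs,
            abs_of_nonneg (by positivity : (0:ℝ) ≤ (Nat.choose (2 * n - 1) n : ℝ)),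
            abs_of_nonneg hxn]
      _ ≤ ((n : ℝ) + 1) * 4 ^ n * x ^ n := by
          gcongr
      _ = ((n : ℝ) + 1) * (4 * x) ^ n := by rw [mul_pow]; ring
  have keysub : ∀ x : ℝ, 0 ≤ x → x < 1 / 4 →
      Summable (fun i : {i : ℕ // 1 ≤ i ∧ 2 * i ∈ D} =>
        (((i : ℕ) : ℝ) - 1) * (Nat.choose (2 * (i : ℕ) - 1) (i : ℕ) : ℝ) * x ^ (i : ℕ)) := by
    intro x hx0 hx4
    exact (key x hx0 hx4).subtype P
  refine ⟨keysub, ?_⟩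
  rw [tendsto_atTop]
  intro M
  set N : ℕ := ⌈7 * M⌉₊ + 1 with hN
  have hMN : 7 * M < (N : ℝ) := by
    have := Nat.le_ceil (7 * M)
    rw [hN]
    push_cast
    linarith
  obtain ⟨t, hts, htfin, htcard⟩ :=
    (hinf.diff (Set.finite_Iio 3)).exists_subset_ncard_eq N
  set S : Finset ℕ := htfin.toFinset with hS
  have hScard : S.card = N := by
    rw [hS, ← htcard]
    exact (Set.ncard_eq_toFinset_card t htfin).symm
  have hSmem : ∀ i ∈ S, (1 ≤ i ∧ 2 * i ∈ D) ∧ 3 ≤ i := by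
    intro i hi
    have := hts (htfin.mem_toFinset.mp hi)
    simp only [Set.mem_diff, Set.mem_setOf_eq, Set.mem_Iio, not_lt] at this
    exact ⟨this.1, this.2⟩
  set g : ℝ → ℝ := fun x => ∑ i ∈ S, ((i : ℝ) - 1) * (Nat.choose (2 * i - 1) i : ℝ) * x ^ i
    with hg
  have hgcont : Continuous g := by
    apply continuous_finset_sum
    intro i _
    fun_prop
  have hg14 : M < g (1 / 4) := by
    have hlb : (S.card : ℝ) * (1 / 7) ≤ g (1 / 4) := by
      have := Finset.card_nsmul_le_sum S
        (fun i => ((i : ℝ) - 1) * (Nat.choose (2 * i - 1) i : ℝ) * (1 / 4 : ℝ) ^ i)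
        (1 / 7 : ℝ) (fun i hi => aux_low i (hSmem i hi).2)
      simpa only [nsmul_eq_mul] using this
    rw [hScard] at hlb
    have : M < (N : ℝ) * (1 / 7) := by linarith
    linarith
  have h1 : ∀ᶠ x in nhdsWithin (1 / 4 : ℝ) (Set.Iio (1 / 4)), M < g x := by
    have htd : Tendsto g (nhdsWithin (1 / 4 : ℝ) (Set.Iio (1 / 4))) (nhds (g (1 / 4))) :=
      (hgcont.tendsto _).mono_left nhdsWithin_le_nhds
    exact htd.eventually (eventually_gt_nhds hg14)
  have h2 : ∀ᶠ x in nhdsWithin (1 / 4 : ℝ) (Set.Iio (1 / 4)), x ∈ Set.Ioo (0 : ℝ) (1 / 4) :=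
    Ioo_mem_nhdsLT_of_mem (by norm_num)
  filter_upwards [h1, h2] with x hx1 hx2
  obtain ⟨hx0, hx4⟩ := hx2
  set f : ℕ → ℝ := fun n => ((n : ℝ) - 1) * (Nat.choose (2 * n - 1) n : ℝ) * x ^ n with hf
  have hfnonneg : ∀ n ∈ P, 0 ≤ f n := by
    intro n hn
    have h1n : 1 ≤ n := hn.1
    have : (0 : ℝ) ≤ (n : ℝ) - 1 := by
      have : (1 : ℝ) ≤ (n : ℝ) := by exact_mod_cast h1n
      linarith
    exact mul_nonneg (mul_nonneg this (by positivity)) (pow_nonneg hx0.le n)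
  have hsumsub : Summable (fun i : ↥P => f ↑i) := keysub x hx0.le hx4
  have hsumind : Summable (P.indicator f) := by
    rwa [← summable_subtype_iff_indicator]
  have hHeq : Hseries D x = ∑' n, P.indicator f n := by
    rw [Hseries, ← tsum_subtype P f]
    rfl
  have hgle : g x ≤ ∑' n, P.indicator f n := by
    have heq : g x = ∑ i ∈ S, P.indicator f i := by
      refine Finset.sum_congr rfl fun i hi => ?_
      exact (Set.indicator_of_mem (show i ∈ P from (hSmem i hi).1) f).symm
    rw [heq]
    exact Summable.sum_le_tsum S
      (fun n _ => Set.indicator_nonneg hfnonneg n) hsumind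
  rw [hHeq]
  linarith
end

section
/- Let D be a set of even positive integers that is not a subset of {2} (i.e., there exists 2i ∈ D with i ≥ 2). Then there exists a unique R₀ > 0 such that the family i ↦ (i−1)·C(2i−1, i)·R₀^i (over i ∈ ℕ with 2i ∈ D) is summable with sum equal to 1. Moreover, if the index set {i : 2i ∈ D} is infinite, then R₀ < 1/4. -/
open Filter Real

/-- The term `(i−1)·C(2i−1,i)·x^i` for an index `i` with `2i ∈ D`. -/
noncomputable def bipTerm (D : Set ℕ) (x : ℝ) (i : {i : ℕ // 2 * i ∈ D}) : ℝ :=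
  (((i : ℕ) : ℝ) - 1) * (Nat.choose (2 * (i : ℕ) - 1) (i : ℕ) : ℝ) * x ^ (i : ℕ)

private lemma central_eq_two_mul (i : ℕ) (hi : 1 ≤ i) :
    Nat.centralBinom i = 2 * Nat.choose (2 * i - 1) i := by
  obtain ⟨j, rfl⟩ : ∃ j, i = j + 1 := ⟨i - 1, by omega⟩
  have h2 : 2 * (j + 1) = (2 * j + 1) + 1 := by omega
  have h1 : 2 * (j + 1) - 1 = 2 * j + 1 := by omega
  rw [h1, Nat.centralBinom, h2, Nat.choose_succ_succ', Nat.choose_symm_half]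
  ring

private lemma my_choose_le (i : ℕ) (hi : 1 ≤ i) :
    Nat.choose (2 * i - 1) i ≤ 4 ^ i := by
  obtain ⟨j, rfl⟩ : ∃ j, i = j + 1 := ⟨i - 1, by omega⟩
  have h1 : 2 * (j + 1) - 1 = 2 * j + 1 := by omega
  rw [h1, Nat.choose_symm_half]
  calc (2 * j + 1).choose j ≤ 4 ^ j := Nat.choose_middle_le_pow j
    _ ≤ 4 ^ (j + 1) := Nat.pow_le_pow_right (by norm_num) (by omega)

private lemma my_four_pow_le (i : ℕ) (hi : 1 ≤ i) :
    4 ^ i ≤ 4 * i * Nat.choose (2 * i - 1) i := by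
  have := Nat.four_pow_le_two_mul_self_mul_centralBinom i hi
  rw [central_eq_two_mul i hi] at this
  calc 4 ^ i ≤ 2 * i * (2 * Nat.choose (2 * i - 1) i) := this
    _ = 4 * i * Nat.choose (2 * i - 1) i := by ring

private lemma eight_mul_le (i : ℕ) (hi : 2 ≤ i) : 8 * i ≤ 4 ^ i := by
  induction i, hi using Nat.le_induction with
  | base => norm_num
  | succ n hn ih =>
    have : 8 ≤ 4 ^ n := le_trans (by omega) ih
    calc 8 * (n + 1) = 8 * n + 8 := by ring
      _ ≤ 4 ^ n + 3 * 4 ^ n := by omega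
      _ = 4 ^ (n + 1) := by ring

section Main

variable {D : Set ℕ}

private lemma idx_pos (hD : ∀ d ∈ D, Even d ∧ 0 < d) (j : {i : ℕ // 2 * i ∈ D}) :
    1 ≤ (j : ℕ) := by
  have := (hD _ j.2).2
  omega

private lemma term_nonneg (hD : ∀ d ∈ D, Even d ∧ 0 < d) {x : ℝ} (hx : 0 ≤ x)
    (j : {i : ℕ // 2 * i ∈ D}) : 0 ≤ bipTerm D x j := by
  have h1 := idx_pos hD j
  have : (1:ℝ) ≤ ((j:ℕ):ℝ) := by exact_mod_cast h1
  unfold bipTerm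
  exact mul_nonneg (mul_nonneg (by linarith) (by positivity)) (pow_nonneg hx _)

private lemma term_mono (hD : ∀ d ∈ D, Even d ∧ 0 < d) {x y : ℝ} (hx : 0 ≤ x) (hxy : x ≤ y)
    (j : {i : ℕ // 2 * i ∈ D}) : bipTerm D x j ≤ bipTerm D y j := by
  have h1 := idx_pos hD j
  have h1' : (1:ℝ) ≤ ((j:ℕ):ℝ) := by exact_mod_cast h1
  unfold bipTerm
  have hpow : x ^ (j:ℕ) ≤ y ^ (j:ℕ) := pow_le_pow_left₀ hx hxy _
  have hc : (0:ℝ) ≤ (((j:ℕ):ℝ) - 1) * (Nat.choose (2 * (j : ℕ) - 1) (j : ℕ) : ℝ) := by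
    have : (0:ℝ) ≤ (Nat.choose (2 * (j : ℕ) - 1) (j : ℕ) : ℝ) := by positivity
    nlinarith
  exact mul_le_mul_of_nonneg_left hpow hc

private lemma term_le (hD : ∀ d ∈ D, Even d ∧ 0 < d) {x : ℝ} (hx : 0 ≤ x)
    (j : {i : ℕ // 2 * i ∈ D}) :
    bipTerm D x j ≤ ((j:ℕ):ℝ) * (4 * x) ^ (j:ℕ) := by
  have h1 := idx_pos hD j
  have h1' : (1:ℝ) ≤ ((j:ℕ):ℝ) := by exact_mod_cast h1
  have hC : (Nat.choose (2 * (j : ℕ) - 1) (j : ℕ) : ℝ) ≤ 4 ^ (j:ℕ) := by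
    exact_mod_cast my_choose_le _ h1
  have hxp : (0:ℝ) ≤ x ^ (j:ℕ) := pow_nonneg hx _
  have hC0 : (0:ℝ) ≤ (Nat.choose (2 * (j : ℕ) - 1) (j : ℕ) : ℝ) := by positivity
  unfold bipTerm
  rw [mul_pow]
  have ha : (((j:ℕ):ℝ) - 1) * (Nat.choose (2 * (j : ℕ) - 1) (j : ℕ) : ℝ)
      ≤ ((j:ℕ):ℝ) * (Nat.choose (2 * (j : ℕ) - 1) (j : ℕ) : ℝ) := by nlinarith
  have hb : ((j:ℕ):ℝ) * (Nat.choose (2 * (j : ℕ) - 1) (j : ℕ) : ℝ)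
      ≤ ((j:ℕ):ℝ) * (4 ^ (j:ℕ)) := mul_le_mul_of_nonneg_left hC (by linarith)
  calc (((j:ℕ):ℝ) - 1) * (Nat.choose (2 * (j : ℕ) - 1) (j : ℕ) : ℝ) * x ^ (j:ℕ)
      ≤ ((j:ℕ):ℝ) * (4 ^ (j:ℕ)) * x ^ (j:ℕ) :=
        mul_le_mul_of_nonneg_right (ha.trans hb) hxp
    _ = ((j:ℕ):ℝ) * (4 ^ (j:ℕ) * x ^ (j:ℕ)) := by ring

private lemma summable_of_lt_quarter (hD : ∀ d ∈ D, Even d ∧ 0 < d) {x : ℝ}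
    (hx : 0 ≤ x) (hx4 : x < 1 / 4) : Summable (bipTerm D x) := by
  have hr : ‖4 * x‖ < 1 := by
    rw [Real.norm_eq_abs, abs_of_nonneg (by linarith)]
    linarith
  have hsum : Summable (fun n : ℕ => (n:ℝ) * (4 * x) ^ n) := by
    have := summable_pow_mul_geometric_of_norm_lt_one (R := ℝ) 1 hr
    simpa using this
  have hsub : Summable (fun j : {i : ℕ // 2 * i ∈ D} => ((j:ℕ):ℝ) * (4 * x) ^ (j:ℕ)) :=
    hsum.subtype _
  exact Summable.of_nonneg_of_le (term_nonneg hD hx) (term_le hD hx) hsub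

private lemma term_ge (hD : ∀ d ∈ D, Even d ∧ 0 < d) {x : ℝ} (hx : 1 / 4 ≤ x)
    (j : {i : ℕ // 2 * i ∈ D}) (hj : 5 ≤ (j:ℕ)) : 1 / 5 ≤ bipTerm D x j := by
  set n := (j : ℕ) with hn
  have hn1 : 1 ≤ n := by omega
  have hC : (4:ℝ) ^ n ≤ 4 * (n:ℝ) * (Nat.choose (2 * n - 1) n : ℝ) := by
    exact_mod_cast my_four_pow_le n hn1
  have hC0 : (0:ℝ) ≤ (Nat.choose (2 * n - 1) n : ℝ) := by positivity
  have h4 : (0:ℝ) < 4 ^ n := by positivity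
  have hn5 : (5:ℝ) ≤ (n:ℝ) := by exact_mod_cast hj
  have key : (1:ℝ) / 5 ≤ ((n:ℝ) - 1) * (Nat.choose (2 * n - 1) n : ℝ) * (1/4) ^ n := by
    have he : ((1:ℝ)/4) ^ n = 1 / 4 ^ n := by rw [div_pow, one_pow]
    rw [he, mul_one_div, div_le_div_iff₀ (by norm_num) h4]
    nlinarith
  calc (1:ℝ) / 5 ≤ ((n:ℝ) - 1) * (Nat.choose (2 * n - 1) n : ℝ) * (1/4) ^ n := key
    _ ≤ bipTerm D x j := by
      unfold bipTerm
      apply mul_le_mul_of_nonneg_left (pow_le_pow_left₀ (by norm_num) hx n)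
      nlinarith

private lemma exists_big_finset (hI : {i : ℕ | 2 * i ∈ D}.Infinite) :
    ∃ T : Finset {i : ℕ // 2 * i ∈ D}, T.card = 6 ∧ ∀ j ∈ T, 5 ≤ (j : ℕ) := by
  have hS : ({i : ℕ | 2 * i ∈ D} \ Set.Iio 5).Infinite :=
    hI.diff (Set.finite_Iio 5)
  obtain ⟨t, hts, htf, htc⟩ := hS.exists_subset_ncard_eq 6
  have hmem : ∀ x ∈ htf.toFinset, 2 * x ∈ D ∧ 5 ≤ x := by
    intro x hx
    rw [Set.Finite.mem_toFinset] at hx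
    have := hts hx
    exact ⟨this.1, by simpa using this.2⟩
  refine ⟨htf.toFinset.attach.map
    ⟨fun x => ⟨x.1, (hmem x.1 x.2).1⟩, ?_⟩, ?_, ?_⟩
  · intro a b hab
    exact Subtype.ext (by have h := congrArg Subtype.val hab; exact h)
  · rw [Finset.card_map, Finset.card_attach, ← Set.ncard_eq_toFinset_card _ htf]
    exact htc
  · intro j hj
    simp only [Finset.mem_map, Finset.mem_attach, true_and] at hj
    obtain ⟨x, hx⟩ := hj
    have := (hmem x.1 x.2).2
    rw [← hx]
    exact this

private lemma exists_b (hD : ∀ d ∈ D, Even d ∧ 0 < d)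
    (hne : ∃ i : ℕ, 2 ≤ i ∧ 2 * i ∈ D) :
    ∃ b : ℝ, 0 < b ∧ Summable (bipTerm D b) ∧ 1 < ∑' j, bipTerm D b j := by
  by_cases hI : {i : ℕ | 2 * i ∈ D}.Infinite
  · -- infinite case
    obtain ⟨T, hTc, hT5⟩ := exists_big_finset hI
    set g : ℝ → ℝ := fun x => ∑ j ∈ T, bipTerm D x j with hg
    have hgc : Continuous g := by
      apply continuous_finset_sum
      intro j _
      exact (continuous_const.mul (continuous_pow _))
    have hg14 : 1 < g (1/4) := by
      have : (T.card : ℝ) * (1/5) ≤ g (1/4) := by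
        have := Finset.card_nsmul_le_sum T (fun j => bipTerm D (1/4) j) (1/5)
          (fun j hj => term_ge hD le_rfl j (hT5 j hj))
        simpa [nsmul_eq_mul] using this
      rw [hTc] at this
      norm_num at this
      linarith
    have htend : Tendsto g (nhdsWithin (1/4) (Set.Iio (1/4))) (nhds (g (1/4))) :=
      (hgc.tendsto _).mono_left nhdsWithin_le_nhds
    have ev1 : ∀ᶠ x in nhdsWithin (1/4 : ℝ) (Set.Iio (1/4)), 1 < g x :=
      htend.eventually (eventually_gt_nhds hg14)
    have ev2 : ∀ᶠ x in nhdsWithin (1/4 : ℝ) (Set.Iio (1/4)), x ∈ Set.Ioo (0:ℝ) (1/4) :=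
      Ioo_mem_nhdsLT_of_mem (by constructor <;> norm_num)
    obtain ⟨b, hb1, hb2⟩ := (ev1.and ev2).exists
    have hsum : Summable (bipTerm D b) := summable_of_lt_quarter hD hb2.1.le hb2.2
    refine ⟨b, hb2.1, hsum, ?_⟩
    calc (1:ℝ) < g b := hb1
      _ ≤ ∑' j, bipTerm D b j :=
        Summable.sum_le_tsum T (fun j _ => term_nonneg hD hb2.1.le j) hsum
  · -- finite case
    rw [Set.not_infinite] at hI
    have : Finite {i : ℕ // 2 * i ∈ D} := hI.to_subtype
    have hsum : Summable (bipTerm D (1:ℝ)) := Summable.of_finite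
    obtain ⟨i₀, hi₀2, hi₀D⟩ := hne
    set j₀ : {i : ℕ // 2 * i ∈ D} := ⟨i₀, hi₀D⟩ with hj₀
    have hterm : (2:ℝ) ≤ bipTerm D 1 j₀ := by
      have hCnat : 2 * (4 * i₀) ≤ 4 * i₀ * Nat.choose (2 * i₀ - 1) i₀ := by
        calc 2 * (4 * i₀) = 8 * i₀ := by ring
          _ ≤ 4 ^ i₀ := eight_mul_le i₀ hi₀2
          _ ≤ 4 * i₀ * Nat.choose (2 * i₀ - 1) i₀ := my_four_pow_le i₀ (by omega)
      have hC : 2 ≤ Nat.choose (2 * i₀ - 1) i₀ :=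
        Nat.le_of_mul_le_mul_left (c := 4 * i₀) (by linarith [hCnat]) (by omega)
      have hC' : (2:ℝ) ≤ (Nat.choose (2 * i₀ - 1) i₀ : ℝ) := by exact_mod_cast hC
      have h2 : (2:ℝ) ≤ (i₀:ℝ) := by exact_mod_cast hi₀2
      unfold bipTerm
      simp only [hj₀, one_pow, mul_one]
      nlinarith
    refine ⟨1, one_pos, hsum, ?_⟩
    calc (1:ℝ) < 2 := one_lt_two
      _ ≤ bipTerm D 1 j₀ := hterm
      _ ≤ ∑' j, bipTerm D 1 j :=
        Summable.le_tsum hsum j₀ (fun j _ => term_nonneg hD zero_le_one j)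

end Main

/-- If `D` is a set of even positive integers containing some `2i` with `i ≥ 2`, then
there is a unique `R₀ > 0` with `Σ_{2i ∈ D} (i−1)·C(2i−1,i)·R₀^i = 1` (the family being
summable); moreover if `{i : 2i ∈ D}` is infinite then `R₀ < 1/4`. -/
theorem unique_characteristic_point (D : Set ℕ)
    (hD : ∀ d ∈ D, Even d ∧ 0 < d)
    (hne : ∃ i : ℕ, 2 ≤ i ∧ 2 * i ∈ D) :
    (∃! R₀ : ℝ, 0 < R₀ ∧ Summable (bipTerm D R₀) ∧ ∑' i, bipTerm D R₀ i = 1) ∧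
      ({i : ℕ | 2 * i ∈ D}.Infinite →
        ∀ R₀ : ℝ, (0 < R₀ ∧ Summable (bipTerm D R₀) ∧ ∑' i, bipTerm D R₀ i = 1) →
          R₀ < 1 / 4) := by
  obtain ⟨i₀, hi₀2, hi₀D⟩ := hne
  set j₀ : {i : ℕ // 2 * i ∈ D} := ⟨i₀, hi₀D⟩ with hj₀
  -- strict monotonicity consequence: no two distinct solutions
  have strict : ∀ a b : ℝ, 0 < a → a < b →
      Summable (bipTerm D a) → Summable (bipTerm D b) →
      ∑' i, bipTerm D a i = 1 → ∑' i, bipTerm D b i = 1 → False := by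
    intro a b ha hab hsa hsb hta htb
    have hlt : bipTerm D a j₀ < bipTerm D b j₀ := by
      unfold bipTerm
      have hC : (0:ℝ) < (Nat.choose (2 * i₀ - 1) i₀ : ℝ) := by
        have := Nat.choose_pos (show i₀ ≤ 2 * i₀ - 1 by omega)
        exact_mod_cast this
      have h2 : (2:ℝ) ≤ (i₀:ℝ) := by exact_mod_cast hi₀2
      have hpow : a ^ i₀ < b ^ i₀ := pow_lt_pow_left₀ hab ha.le (by omega)
      have hc0 : (0:ℝ) < ((i₀:ℝ) - 1) * (Nat.choose (2 * i₀ - 1) i₀ : ℝ) := by nlinarith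
      simp only [hj₀]
      exact mul_lt_mul_of_pos_left hpow hc0
    have := Summable.tsum_lt_tsum (fun j => term_mono hD ha.le hab.le j) hlt hsa hsb
    rw [hta, htb] at this
    exact lt_irrefl 1 this
  constructor
  · -- existence and uniqueness
    obtain ⟨b, hb0, hbs, hbt⟩ := exists_b hD ⟨i₀, hi₀2, hi₀D⟩
    -- continuity of the sum on [0, b]
    set F : ℝ → ℝ := fun x => ∑' j, bipTerm D x j with hF
    have hcont : ContinuousOn F (Set.Icc 0 b) := by
      apply continuousOn_tsum (u := fun j => bipTerm D b j)
      · intro j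
        exact (continuous_const.mul (continuous_pow _)).continuousOn
      · exact hbs
      · intro j x hx
        rw [Real.norm_eq_abs, abs_of_nonneg (term_nonneg hD hx.1 j)]
        exact term_mono hD hx.1 hx.2 j
    have hF0 : F 0 = 0 := by
      have : ∀ j : {i : ℕ // 2 * i ∈ D}, bipTerm D 0 j = 0 := by
        intro j
        unfold bipTerm
        rw [zero_pow (by have := idx_pos hD j; omega), mul_zero]
      simp only [hF]
      rw [tsum_congr this, tsum_zero]
    have h1mem : (1:ℝ) ∈ Set.Icc (F 0) (F b) := by
      rw [hF0]
      exact ⟨zero_le_one, hbt.le⟩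
    obtain ⟨R₀, hR₀mem, hFR₀⟩ := intermediate_value_Icc hb0.le hcont h1mem
    have hR₀pos : 0 < R₀ := by
      rcases lt_or_eq_of_le hR₀mem.1 with h | h
      · exact h
      · exfalso; rw [← h] at hFR₀; rw [hF0] at hFR₀; norm_num at hFR₀
    have hR₀sum : Summable (bipTerm D R₀) :=
      Summable.of_nonneg_of_le (term_nonneg hD hR₀pos.le)
        (fun j => term_mono hD hR₀pos.le hR₀mem.2 j) hbs
    refine ⟨R₀, ⟨hR₀pos, hR₀sum, hFR₀⟩, ?_⟩
    intro y ⟨hy0, hys, hyt⟩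
    by_contra hne'
    rcases lt_or_gt_of_ne hne' with h | h
    · exact strict y R₀ hy0 h hys hR₀sum hyt hFR₀
    · exact strict R₀ y hR₀pos h hR₀sum hys hFR₀ hyt
  · -- R₀ < 1/4 in the infinite case
    intro hI R₀ ⟨hR₀0, hR₀s, hR₀t⟩
    by_contra hlt
    push_neg at hlt
    obtain ⟨T, hTc, hT5⟩ := exists_big_finset hI
    have hsum : (T.card : ℝ) * (1/5) ≤ ∑ j ∈ T, bipTerm D R₀ j := by
      have := Finset.card_nsmul_le_sum T (fun j => bipTerm D R₀ j) (1/5)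
        (fun j hj => term_ge hD hlt j (hT5 j hj))
      simpa [nsmul_eq_mul] using this
    rw [hTc] at hsum
    have hle : ∑ j ∈ T, bipTerm D R₀ j ≤ 1 := by
      rw [← hR₀t]
      exact Summable.sum_le_tsum T (fun j _ => term_nonneg hD hR₀0.le j) hR₀s
    norm_num at hsum
    linarith
end

section
/- Let L, R be real numbers with L ≥ 0, R ≥ 0 and L + 2√R < 1. Then the family (ℓ, m) ∈ ℕ×ℕ ↦ B_{ℓ,m}·L^ℓ·R^m is summable and Σ_{ℓ,m ≥ 0} B_{ℓ,m}·L^ℓ·R^m = 1/√((1−L)² − 4R). -/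
open Filter Real

/-- The Motzkin-bridge trinomial coefficient `B_{ℓ,m} = (ℓ+2m)! / (ℓ!·m!·m!)`. -/
def Bcoef (l m : ℕ) : ℕ :=
  (l + 2 * m).factorial / (l.factorial * m.factorial * m.factorial)

section Aux
open Polynomial Finset Nat

lemma descP_half (k : ℕ) : (descPochhammer ℤ k).smeval (-(1/2):ℝ) =
    (-(1/4):ℝ)^k * k.centralBinom * k.factorial := by
  induction k with
  | zero => simp
  | succ k ih =>
    rw [descPochhammer_succ_right, smeval_mul, smeval_sub, smeval_X, smeval_natCast, ih]
    have hrec : ((k+1 : ℕ) : ℝ) * (k+1).centralBinom = 2*(2*(k:ℝ)+1) * k.centralBinom := by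
      exact_mod_cast congrArg (Nat.cast : ℕ → ℝ) (Nat.succ_mul_centralBinom_succ k)
    push_cast at hrec ⊢
    rw [Nat.factorial_succ]
    push_cast
    simp only [pow_one, pow_zero, nsmul_eq_mul, mul_one]
    linear_combination ((1:ℝ)/4) * (-(1/4):ℝ)^k * (k.factorial : ℝ) * hrec

lemma descP_negone (k : ℕ) : (descPochhammer ℤ k).smeval (-1:ℝ) =
    (-1:ℝ)^k * k.factorial := by
  induction k with
  | zero => simp
  | succ k ih =>
    rw [descPochhammer_succ_right, smeval_mul, smeval_sub, smeval_X, smeval_natCast, ih,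
      Nat.factorial_succ]
    push_cast
    ring

lemma centralBinom_conv (n : ℕ) :
    ∑ ij ∈ antidiagonal n, (ij.1.centralBinom : ℝ) * ij.2.centralBinom = 4 ^ n := by
  have H := Ring.descPochhammer_smeval_add (R := ℝ) (r := -(1/2)) (s := -(1/2)) n
    (Commute.all _ _)
  have hsum : ((-1:ℝ))^n * n.factorial =
      ∑ ij ∈ antidiagonal n, ((-(1/4):ℝ))^n * n.factorial *
        ((ij.1.centralBinom : ℝ) * ij.2.centralBinom) := by
    have : (-(1/2):ℝ) + -(1/2) = -1 := by norm_num
    rw [this, descP_negone] at H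
    rw [H]
    refine Finset.sum_congr rfl fun ij hij => ?_
    have hij' : ij.1 + ij.2 = n := Finset.HasAntidiagonal.mem_antidiagonal.mp hij
    rw [descP_half, descP_half]
    have hfac : (n.choose ij.1 : ℝ) * ij.1.factorial * ij.2.factorial = n.factorial := by
      have := Nat.choose_mul_factorial_mul_factorial (n := n) (k := ij.1) (by omega)
      have h2 : n - ij.1 = ij.2 := by omega
      rw [h2] at this
      exact_mod_cast congrArg (Nat.cast : ℕ → ℝ) this
    have hpow : ((-(1/4):ℝ))^ij.1 * ((-(1/4):ℝ))^ij.2 = ((-(1/4):ℝ))^n := by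
      rw [← pow_add, hij']
    linear_combination (ij.1.centralBinom : ℝ) * ij.2.centralBinom *
        (((-(1/4):ℝ))^ij.1 * ((-(1/4):ℝ))^ij.2 * hfac +
          (n.factorial : ℝ) * hpow - ((-(1/4):ℝ))^ij.1 * ((-(1/4):ℝ))^ij.2 * hfac) +
      (ij.1.centralBinom : ℝ) * ij.2.centralBinom * ((-(1/4):ℝ))^ij.1 * ((-(1/4):ℝ))^ij.2 * hfac
  rw [← Finset.mul_sum] at hsum
  field_simp at hsum
  have h4 : ((-(1/4):ℝ))^n * 4^n = (-1)^n := by rw [← mul_pow]; norm_num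
  exact mul_left_cancel₀ (pow_ne_zero n (by norm_num : (-(1/4):ℝ) ≠ 0)) (hsum.symm.trans h4.symm)

lemma centralBinom_le_four_pow (m : ℕ) : m.centralBinom ≤ 4 ^ m := by
  calc m.centralBinom = (2*m).choose m := Nat.centralBinom_eq_two_mul_choose m
    _ ≤ ∑ i ∈ Finset.range (2*m+1), (2*m).choose i :=
        Finset.single_le_sum (fun i _ => Nat.zero_le _) (Finset.mem_range.mpr (by omega))
    _ = 2 ^ (2*m) := Nat.sum_range_choose (2*m)
    _ = 4 ^ m := by rw [pow_mul]; norm_num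

lemma summable_centralBinom (x : ℝ) (hx0 : 0 ≤ x) (hx : 4 * x < 1) :
    Summable (fun m : ℕ => (m.centralBinom : ℝ) * x ^ m) := by
  apply Summable.of_nonneg_of_le (fun m => by positivity)
    (fun m => ?_) (summable_geometric_of_lt_one (by positivity) hx)
  calc (m.centralBinom : ℝ) * x ^ m ≤ (4:ℝ)^m * x^m := by
        apply mul_le_mul_of_nonneg_right _ (by positivity)
        exact_mod_cast _root_.centralBinom_le_four_pow m
    _ = (4*x)^m := by rw [mul_pow]

lemma centralBinom_gf (x : ℝ) (hx0 : 0 ≤ x) (hx : 4 * x < 1) :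
    HasSum (fun m : ℕ => (m.centralBinom : ℝ) * x ^ m) (1 / Real.sqrt (1 - 4 * x)) := by
  have hs := summable_centralBinom x hx0 hx
  set g := ∑' m : ℕ, (m.centralBinom : ℝ) * x ^ m with hg
  have hgnn : 0 ≤ g := tsum_nonneg (fun m => by positivity)
  have hnorm : Summable (fun m : ℕ => ‖(m.centralBinom : ℝ) * x ^ m‖) := by
    simp only [Real.norm_eq_abs]
    apply hs.abs
  have hsq : g * g = (1 - 4*x)⁻¹ := by
    rw [hg, tsum_mul_tsum_eq_tsum_sum_antidiagonal_of_summable_norm hnorm hnorm]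
    have : ∀ n : ℕ, ∑ kl ∈ Finset.HasAntidiagonal.antidiagonal n,
        ((kl.1.centralBinom : ℝ) * x ^ kl.1) * ((kl.2.centralBinom : ℝ) * x ^ kl.2)
        = (4*x)^n := by
      intro n
      have : ∀ kl ∈ Finset.HasAntidiagonal.antidiagonal n,
          ((kl.1.centralBinom : ℝ) * x ^ kl.1) * ((kl.2.centralBinom : ℝ) * x ^ kl.2)
          = ((kl.1.centralBinom : ℝ) * kl.2.centralBinom) * x ^ n := by
        intro kl hkl
        have h1 : kl.1 + kl.2 = n := Finset.HasAntidiagonal.mem_antidiagonal.mp hkl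
        rw [← h1, pow_add]; ring
      rw [Finset.sum_congr rfl this, ← Finset.sum_mul, centralBinom_conv, mul_pow]
    simp only [this]
    exact tsum_geometric_of_lt_one (by positivity) hx
  have hxlt : (0:ℝ) < 1 - 4*x := by linarith
  have hgval : g = 1 / Real.sqrt (1 - 4*x) := by
    have h1 : Real.sqrt (g * g) = 1 / Real.sqrt (1-4*x) := by
      rw [hsq, Real.sqrt_inv, one_div]
    rw [Real.sqrt_mul_self hgnn] at h1
    exact h1
  rw [← hgval]
  exact hs.hasSum

lemma Bcoef_eq' (l m : ℕ) : Bcoef l m = (l + 2*m).choose (2*m) * m.centralBinom := by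
  have h1 : (l + 2*m).choose (2*m) * (2*m).factorial * l.factorial = (l + 2*m).factorial := by
    have := Nat.choose_mul_factorial_mul_factorial (n := l + 2*m) (k := 2*m) (by omega)
    have h : l + 2*m - 2*m = l := by omega
    rwa [h] at this
  have h2 : m.centralBinom * m.factorial * m.factorial = (2*m).factorial := by
    have := Nat.choose_mul_factorial_mul_factorial (n := 2*m) (k := m) (by omega)
    have h : 2*m - m = m := by omega
    rw [h] at this
    rw [Nat.centralBinom_eq_two_mul_choose]; exact this
  unfold Bcoef
  rw [← h1, ← h2]
  have h3 : (l + 2*m).choose (2*m) * (m.centralBinom * m.factorial * m.factorial) * l.factorial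
      = ((l + 2*m).choose (2*m) * m.centralBinom) * (l.factorial * m.factorial * m.factorial) := by
    ring
  rw [h3, Nat.mul_div_cancel _ (by positivity)]


end Aux

open Polynomial Finset Nat

/-- For `L, R ≥ 0` with `L + 2√R < 1`, the family `B_{ℓ,m}·L^ℓ·R^m` is summable with sum
`1/√((1−L)² − 4R)`. -/
theorem bridge_gf_value (L R : ℝ) (hL : 0 ≤ L) (hR : 0 ≤ R)
    (h : L + 2 * Real.sqrt R < 1) :
    Summable (fun p : ℕ × ℕ => (Bcoef p.1 p.2 : ℝ) * L ^ p.1 * R ^ p.2) ∧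
      ∑' p : ℕ × ℕ, (Bcoef p.1 p.2 : ℝ) * L ^ p.1 * R ^ p.2 =
        1 / Real.sqrt ((1 - L) ^ 2 - 4 * R) := by
  have hsR : 0 ≤ Real.sqrt R := Real.sqrt_nonneg R
  have hL1 : L < 1 := by nlinarith
  have h1L : 0 < 1 - L := by linarith
  have h4R : 4 * R < (1 - L)^2 := by
    nlinarith [Real.sq_sqrt hR]
  set x : ℝ := R / (1-L)^2 with hxdef
  have hx0 : 0 ≤ x := div_nonneg hR (by positivity)
  have hx : 4 * x < 1 := by
    rw [hxdef, ← mul_div_assoc, div_lt_one (by positivity)]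
    linarith
  have hrow : ∀ m : ℕ, HasSum (fun l : ℕ => (Bcoef l m : ℝ) * L ^ l * R ^ m)
      ((1/(1-L)) * ((m.centralBinom : ℝ) * x ^ m)) := by
    intro m
    have hgeom := hasSum_choose_mul_geometric_of_norm_lt_one (𝕜 := ℝ) (2*m) (r := L)
      (by rwa [Real.norm_eq_abs, abs_of_nonneg hL])
    have h2 := hgeom.mul_left ((m.centralBinom : ℝ) * R ^ m)
    have hval : ((m.centralBinom : ℝ) * R ^ m) * (1 / (1-L)^(2*m+1))
        = (1/(1-L)) * ((m.centralBinom : ℝ) * x ^ m) := by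
      have hne : (1-L) ≠ 0 := ne_of_gt h1L
      rw [hxdef, div_pow, pow_succ, pow_mul]
      field_simp
    rw [hval] at h2
    have hfun : (fun l : ℕ => (Bcoef l m : ℝ) * L ^ l * R ^ m) = fun i : ℕ =>
        (m.centralBinom : ℝ) * R ^ m * (((i + 2 * m).choose (2 * m) : ℕ) * L ^ i) := by
      funext l
      rw [Bcoef_eq']
      push_cast
      ring
    rw [hfun]; exact h2
  set G : ℕ × ℕ → ℝ := fun q => (Bcoef q.2 q.1 : ℝ) * L ^ q.2 * R ^ q.1 with hG
  have hGnn : 0 ≤ G := fun q =>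
    mul_nonneg (mul_nonneg (Nat.cast_nonneg _) (pow_nonneg hL _)) (pow_nonneg hR _)
  have houter := (centralBinom_gf x hx0 hx).mul_left (1/(1-L))
  have hGsum : Summable G := by
    rw [summable_prod_of_nonneg hGnn]
    refine ⟨fun m => (hrow m).summable, ?_⟩
    apply Summable.congr houter.summable
    intro m
    exact ((hrow m).tsum_eq).symm
  have hfs : Summable (fun p : ℕ × ℕ => (Bcoef p.1 p.2 : ℝ) * L ^ p.1 * R ^ p.2) :=
    (Equiv.prodComm ℕ ℕ).summable_iff.mp hGsum
  refine ⟨hfs, ?_⟩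
  have hswap : ∑' p : ℕ × ℕ, (Bcoef p.1 p.2 : ℝ) * L ^ p.1 * R ^ p.2 = ∑' q, G q :=
    ((Equiv.prodComm ℕ ℕ).tsum_eq
      (fun p : ℕ × ℕ => (Bcoef p.1 p.2 : ℝ) * L ^ p.1 * R ^ p.2)).symm
  rw [hswap, Summable.tsum_prod hGsum]
  have hinner : ∀ m : ℕ, ∑' l, G (m, l) = (1/(1-L)) * ((m.centralBinom : ℝ) * x ^ m) :=
    fun m => (hrow m).tsum_eq
  rw [tsum_congr hinner, houter.tsum_eq]
  have hfac : (1 - L)^2 - 4*R = (1-L)^2 * (1 - 4*x) := by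
    rw [hxdef]
    field_simp
  rw [hfac, Real.sqrt_mul (by positivity), Real.sqrt_sq h1L.le]
  have hs4 : 0 < Real.sqrt (1 - 4*x) := Real.sqrt_pos.mpr (by linarith)
  field_simp
end

section
/- Let L, R be real numbers with L ≥ 0, R > 0 and L + 2√R < 1. Then the family (ℓ, m) ∈ ℕ×ℕ ↦ B^{(+1)}_{ℓ,m}·L^ℓ·R^m is summable and Σ_{ℓ,m ≥ 0} B^{(+1)}_{ℓ,m}·L^ℓ·R^m = (1 − L − √((1−L)² − 4R)) / (2R·√((1−L)² − 4R)). -/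
open Filter Real

/-- The coefficient `B^{(+1)}_{ℓ,m} = (ℓ+2m+1)! / (ℓ!·m!·(m+1)!)` counting Motzkin paths
from `0` to `+1`. -/
def BcoefP1 (l m : ℕ) : ℕ :=
  (l + 2 * m + 1).factorial / (l.factorial * m.factorial * (m + 1).factorial)

namespace MotzkinAux
open Finset Nat
open Finset Nat

/-- `b m = C(2m+1, m)`. -/
def b (m : ℕ) : ℕ := (2 * m + 1).choose m

lemma b_mul (m : ℕ) : (m + 1) * b m = (2 * m + 1) * Nat.centralBinom m := by
  have h2 := Nat.add_one_mul_choose_eq (2 * m) m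
  have hsymm : (2 * m + 1).choose (m + 1) = b m := by
    have := Nat.choose_symm (show m ≤ 2 * m + 1 by omega)
    rw [show 2 * m + 1 - m = m + 1 by omega] at this
    exact this
  rw [Nat.centralBinom_eq_two_mul_choose]
  calc (m + 1) * b m = (2 * m + 1).choose (m + 1) * (m + 1) := by rw [hsymm]; ring
    _ = Nat.succ (2 * m) * (2 * m).choose m := h2.symm
    _ = (2 * m + 1) * (2 * m).choose m := rfl

lemma I2 (m : ℕ) : b m + catalan m = 2 * Nat.centralBinom m := by
  have h := succ_mul_catalan_eq_centralBinom m
  have hb := b_mul m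
  have key : (m + 1) * (b m + catalan m) = (m + 1) * (2 * Nat.centralBinom m) := by
    rw [Nat.mul_add, hb, h]; ring
  exact Nat.eq_of_mul_eq_mul_left (by omega) key

lemma b_rec (n : ℕ) : (n + 2) * b (n + 1) = (4 * n + 6) * b n := by
  have h1 := Nat.add_one_mul_choose_eq (2 * n + 1) n
  have h2 := Nat.add_one_mul_choose_eq (2 * n + 2) (n + 1)
  have hs : (2 * n + 3).choose (n + 2) = b (n + 1) := by
    have := Nat.choose_symm (show n + 1 ≤ 2 * n + 3 by omega)
    rw [show 2 * n + 3 - (n + 1) = n + 2 by omega] at this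
    rw [this]; rfl
  have key : (n + 1) * ((n + 2) * b (n + 1)) = (n + 1) * ((4 * n + 6) * b n) := by
    calc (n + 1) * ((n + 2) * b (n + 1)) = ((2 * n + 3).choose (n + 2) * (n + 2)) * (n + 1) := by
          rw [hs]; ring
      _ = (Nat.succ (2 * n + 2) * (2 * n + 2).choose (n + 1)) * (n + 1) := by rw [h2]
      _ = (2 * n + 3) * ((2 * n + 1 + 1).choose (n + 1) * (n + 1)) := by
          simp [Nat.succ_eq_add_one]; ring
      _ = (2 * n + 3) * (Nat.succ (2 * n + 1) * (2 * n + 1).choose n) := by rw [h1]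
      _ = (2 * n + 3) * ((2 * n + 2) * b n) := rfl
      _ = (n + 1) * ((4 * n + 6) * b n) := by ring
  exact Nat.eq_of_mul_eq_mul_left (by omega) key

lemma a_succ (n : ℕ) : Nat.centralBinom (n + 1) = 2 * b n := by
  rw [Nat.centralBinom_eq_two_mul_choose, show 2 * (n + 1) = (2 * n + 1) + 1 by ring,
    Nat.choose_succ_succ' (2 * n + 1) n]
  have hsymm : (2 * n + 1).choose (n + 1) = b n := by
    have := Nat.choose_symm (show n ≤ 2 * n + 1 by omega)
    rw [show 2 * n + 1 - n = n + 1 by omega] at this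
    exact this
  rw [hsymm]; unfold b; ring

lemma catalan_rec (n : ℕ) : (n + 2) * catalan (n + 1) = (4 * n + 2) * catalan n := by
  have h1 := succ_mul_catalan_eq_centralBinom (n + 1)
  have h2 := Nat.succ_mul_centralBinom_succ n
  have h3 := succ_mul_catalan_eq_centralBinom n
  have key : (n + 1) * ((n + 2) * catalan (n + 1)) = (n + 1) * ((4 * n + 2) * catalan n) := by
    calc (n + 1) * ((n + 2) * catalan (n + 1)) = (n + 1) * ((n + 1 + 1) * catalan (n + 1)) := by
          ring
      _ = (n + 1) * Nat.centralBinom (n + 1) := by rw [h1]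
      _ = 2 * (2 * n + 1) * Nat.centralBinom n := h2
      _ = 2 * (2 * n + 1) * ((n + 1) * catalan n) := by rw [h3]
      _ = (n + 1) * ((4 * n + 2) * catalan n) := by ring
  exact Nat.eq_of_mul_eq_mul_left (by omega) key

/-- `S n = Σ a_k a_{n-k}`. -/
def S (n : ℕ) : ℕ := ∑ k ∈ range (n + 1), Nat.centralBinom k * Nat.centralBinom (n - k)

def W (n : ℕ) : ℕ := ∑ k ∈ range (n + 1), k * (Nat.centralBinom k * Nat.centralBinom (n - k))

lemma two_W (n : ℕ) : 2 * W n = n * S n := by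
  have hrefl : W n = ∑ k ∈ range (n + 1),
      (n - k) * (Nat.centralBinom (n - k) * Nat.centralBinom k) := by
    unfold W
    rw [← Finset.sum_range_reflect (fun k => k * (Nat.centralBinom k * Nat.centralBinom (n - k)))
      (n + 1)]
    apply Finset.sum_congr rfl
    intro k hk
    simp only [Finset.mem_range] at hk
    have h1 : n + 1 - 1 - k = n - k := by omega
    have h2 : n - (n - k) = k := by omega
    rw [h1, h2]
  have : 2 * W n = W n + W n := by ring
  rw [this]
  nth_rewrite 2 [hrefl]
  unfold W S
  rw [← Finset.sum_add_distrib, Finset.mul_sum]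
  apply Finset.sum_congr rfl
  intro k hk
  simp only [Finset.mem_range] at hk
  have h : k + (n - k) = n := by omega
  calc k * (Nat.centralBinom k * Nat.centralBinom (n - k)) +
        (n - k) * (Nat.centralBinom (n - k) * Nat.centralBinom k)
      = (k + (n - k)) * (Nat.centralBinom k * Nat.centralBinom (n - k)) := by ring
    _ = n * (Nat.centralBinom k * Nat.centralBinom (n - k)) := by rw [h]

lemma W_succ (n : ℕ) : W (n + 1) = 4 * W n + 2 * S n := by
  have h0 : W (n + 1) = ∑ j ∈ range (n + 1),
      (j + 1) * (Nat.centralBinom (j + 1) * Nat.centralBinom (n - j)) := by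
    unfold W
    rw [Finset.sum_range_succ' (fun k => k * (Nat.centralBinom k * Nat.centralBinom (n + 1 - k)))
      (n + 1)]
    simp only [Nat.zero_mul, add_zero]
    apply Finset.sum_congr rfl
    intro j hj
    simp only [Finset.mem_range] at hj
    congr 3
    omega
  rw [h0]
  have h1 : ∀ j ∈ range (n + 1),
      (j + 1) * (Nat.centralBinom (j + 1) * Nat.centralBinom (n - j)) =
        4 * (j * (Nat.centralBinom j * Nat.centralBinom (n - j))) +
          2 * (Nat.centralBinom j * Nat.centralBinom (n - j)) := by
    intro j hj
    have hrec := Nat.succ_mul_centralBinom_succ j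
    calc (j + 1) * (Nat.centralBinom (j + 1) * Nat.centralBinom (n - j))
        = ((j + 1) * Nat.centralBinom (j + 1)) * Nat.centralBinom (n - j) := by ring
      _ = (2 * (2 * j + 1) * Nat.centralBinom j) * Nat.centralBinom (n - j) := by rw [hrec]
      _ = 4 * (j * (Nat.centralBinom j * Nat.centralBinom (n - j))) +
          2 * (Nat.centralBinom j * Nat.centralBinom (n - j)) := by ring
  rw [Finset.sum_congr rfl h1, Finset.sum_add_distrib, ← Finset.mul_sum, ← Finset.mul_sum]; rfl

lemma S_eq (n : ℕ) : S n = 4 ^ n := by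
  induction n with
  | zero => simp [S, Nat.centralBinom]
  | succ n ih =>
    have key : (n + 1) * S (n + 1) = (n + 1) * (4 * S n) := by
      calc (n + 1) * S (n + 1) = 2 * W (n + 1) := (two_W (n + 1)).symm
        _ = 2 * (4 * W n + 2 * S n) := by rw [W_succ]
        _ = 4 * (2 * W n) + 4 * S n := by ring
        _ = 4 * (n * S n) + 4 * S n := by rw [two_W]
        _ = (n + 1) * (4 * S n) := by ring
    have := Nat.eq_of_mul_eq_mul_left (show 0 < n + 1 by omega) key
    rw [this, ih]; ring

/-- `T n = Σ catalan_k a_{n-k}`. -/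
def T (n : ℕ) : ℕ := ∑ k ∈ range (n + 1), catalan k * Nat.centralBinom (n - k)

def W' (n : ℕ) : ℕ := ∑ k ∈ range (n + 1), k * (catalan k * Nat.centralBinom (n - k))

def Q' (n : ℕ) : ℕ := ∑ k ∈ range (n + 1), (n - k) * (catalan k * Nat.centralBinom (n - k))

lemma WQ (n : ℕ) : W' n + Q' n = n * T n := by
  unfold W' Q' T
  rw [← Finset.sum_add_distrib, Finset.mul_sum]
  apply Finset.sum_congr rfl
  intro k hk
  simp only [Finset.mem_range] at hk
  have h : k + (n - k) = n := by omega
  calc k * (catalan k * Nat.centralBinom (n - k)) +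
        (n - k) * (catalan k * Nat.centralBinom (n - k))
      = (k + (n - k)) * (catalan k * Nat.centralBinom (n - k)) := by ring
    _ = n * (catalan k * Nat.centralBinom (n - k)) := by rw [h]

lemma Q'_succ (n : ℕ) : Q' (n + 1) = 4 * Q' n + 2 * T n := by
  have h0 : Q' (n + 1) = ∑ k ∈ range (n + 1),
      (n + 1 - k) * (catalan k * Nat.centralBinom (n + 1 - k)) := by
    unfold Q'
    rw [Finset.sum_range_succ]
    simp
  rw [h0]
  have h1 : ∀ k ∈ range (n + 1),
      (n + 1 - k) * (catalan k * Nat.centralBinom (n + 1 - k)) =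
        4 * ((n - k) * (catalan k * Nat.centralBinom (n - k))) +
          2 * (catalan k * Nat.centralBinom (n - k)) := by
    intro k hk
    simp only [Finset.mem_range] at hk
    have he : n + 1 - k = (n - k) + 1 := by omega
    have hrec := Nat.succ_mul_centralBinom_succ (n - k)
    rw [he]
    calc ((n - k) + 1) * (catalan k * Nat.centralBinom ((n - k) + 1))
        = catalan k * (((n - k) + 1) * Nat.centralBinom ((n - k) + 1)) := by ring
      _ = catalan k * (2 * (2 * (n - k) + 1) * Nat.centralBinom (n - k)) := by rw [hrec]
      _ = 4 * ((n - k) * (catalan k * Nat.centralBinom (n - k))) +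
          2 * (catalan k * Nat.centralBinom (n - k)) := by ring
  rw [Finset.sum_congr rfl h1, Finset.sum_add_distrib, ← Finset.mul_sum, ← Finset.mul_sum]; rfl

lemma catalan_rec' (j : ℕ) : (j + 2) * catalan (j + 1) = 2 * (2 * j + 1) * catalan j := by
  have h1 := succ_mul_catalan_eq_centralBinom (j + 1)
  have h2 := Nat.succ_mul_centralBinom_succ j
  have h3 := succ_mul_catalan_eq_centralBinom j
  have key : (j + 1) * ((j + 2) * catalan (j + 1)) = (j + 1) * (2 * (2 * j + 1) * catalan j) := by
    calc (j + 1) * ((j + 2) * catalan (j + 1)) = (j + 1) * ((j + 1 + 1) * catalan (j + 1)) := by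
          ring
      _ = (j + 1) * Nat.centralBinom (j + 1) := by rw [h1]
      _ = 2 * (2 * j + 1) * Nat.centralBinom j := h2
      _ = 2 * (2 * j + 1) * ((j + 1) * catalan j) := by rw [h3]
      _ = (j + 1) * (2 * (2 * j + 1) * catalan j) := by ring
  exact Nat.eq_of_mul_eq_mul_left (by omega) key

lemma W'_succ (n : ℕ) :
    W' (n + 1) + T (n + 1) = 4 * W' n + 2 * T n + Nat.centralBinom (n + 1) := by
  have h0 : W' (n + 1) = ∑ j ∈ range (n + 1),
      (j + 1) * (catalan (j + 1) * Nat.centralBinom (n - j)) := by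
    unfold W'
    rw [Finset.sum_range_succ' (fun k => k * (catalan k * Nat.centralBinom (n + 1 - k))) (n + 1)]
    simp only [Nat.zero_mul, add_zero]
    apply Finset.sum_congr rfl
    intro j hj
    simp only [Finset.mem_range] at hj
    congr 3
    omega
  have hT : T (n + 1) = (∑ j ∈ range (n + 1), catalan (j + 1) * Nat.centralBinom (n - j)) +
      Nat.centralBinom (n + 1) := by
    unfold T
    rw [Finset.sum_range_succ' (fun k => catalan k * Nat.centralBinom (n + 1 - k)) (n + 1)]
    simp only [catalan_zero, one_mul, Nat.sub_zero]
    congr 1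
    apply Finset.sum_congr rfl
    intro j hj
    simp only [Finset.mem_range] at hj
    congr 2
    omega
  rw [h0, hT, ← add_assoc, ← Finset.sum_add_distrib]
  congr 1
  have h1 : ∀ j ∈ range (n + 1),
      (j + 1) * (catalan (j + 1) * Nat.centralBinom (n - j)) +
          catalan (j + 1) * Nat.centralBinom (n - j) =
        4 * (j * (catalan j * Nat.centralBinom (n - j))) +
          2 * (catalan j * Nat.centralBinom (n - j)) := by
    intro j hj
    have hrec := catalan_rec' j
    calc (j + 1) * (catalan (j + 1) * Nat.centralBinom (n - j)) +
          catalan (j + 1) * Nat.centralBinom (n - j)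
        = ((j + 2) * catalan (j + 1)) * Nat.centralBinom (n - j) := by ring
      _ = (2 * (2 * j + 1) * catalan j) * Nat.centralBinom (n - j) := by rw [hrec]
      _ = 4 * (j * (catalan j * Nat.centralBinom (n - j))) +
          2 * (catalan j * Nat.centralBinom (n - j)) := by ring
  rw [Finset.sum_congr rfl h1, Finset.sum_add_distrib, ← Finset.mul_sum, ← Finset.mul_sum]; rfl

lemma T_eq (n : ℕ) : T n = b n := by
  induction n with
  | zero => simp [T, b, Nat.centralBinom]
  | succ n ih =>
    have key : (n + 2) * T (n + 1) = (n + 2) * b (n + 1) := by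
      calc (n + 2) * T (n + 1)
          = (n + 1) * T (n + 1) + T (n + 1) := by ring
        _ = (W' (n + 1) + Q' (n + 1)) + T (n + 1) := by rw [WQ]
        _ = (W' (n + 1) + T (n + 1)) + Q' (n + 1) := by ring
        _ = (4 * W' n + 2 * T n + Nat.centralBinom (n + 1)) + (4 * Q' n + 2 * T n) := by
            rw [W'_succ, Q'_succ]
        _ = 4 * (W' n + Q' n) + 4 * T n + Nat.centralBinom (n + 1) := by ring
        _ = 4 * (n * T n) + 4 * T n + Nat.centralBinom (n + 1) := by rw [WQ]
        _ = (4 * n + 4) * b n + 2 * b n := by rw [ih, a_succ]; ring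
        _ = (4 * n + 6) * b n := by ring
        _ = (n + 2) * b (n + 1) := (b_rec n).symm
    exact Nat.eq_of_mul_eq_mul_left (by omega) key

lemma cb_le (m : ℕ) : Nat.centralBinom m ≤ 4 ^ m :=
  calc Nat.centralBinom m = (2 * m).choose m := Nat.centralBinom_eq_two_mul_choose m
    _ ≤ (2 * m + 1).choose m := Nat.choose_le_choose m (by omega)
    _ ≤ 4 ^ m := Nat.choose_middle_le_pow m

lemma b_le (m : ℕ) : b m ≤ 4 ^ m := Nat.choose_middle_le_pow m

lemma catalan_le (m : ℕ) : catalan m ≤ 4 ^ m :=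
  calc catalan m ≤ (m + 1) * catalan m := Nat.le_mul_of_pos_left _ (by omega)
    _ = Nat.centralBinom m := succ_mul_catalan_eq_centralBinom m
    _ ≤ 4 ^ m := cb_le m

lemma summable_aux {x : ℝ} (hx0 : 0 ≤ x) (hx : x < 1/4) {u : ℕ → ℕ}
    (hu : ∀ m, u m ≤ 4 ^ m) : Summable (fun m => (u m : ℝ) * x ^ m) := by
  have hgeom : Summable (fun m : ℕ => (4 * x) ^ m) :=
    summable_geometric_of_lt_one (by linarith) (by linarith)
  refine Summable.of_nonneg_of_le (fun m => by positivity) (fun m => ?_) hgeom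
  calc (u m : ℝ) * x ^ m ≤ (4 ^ m : ℕ) * x ^ m := by
        apply mul_le_mul_of_nonneg_right _ (by positivity)
        exact_mod_cast hu m
      _ = (4 * x) ^ m := by rw [mul_pow]; norm_num

lemma hasSum_b_series {x : ℝ} (hx0 : 0 < x) (hx : x < 1/4) :
    HasSum (fun m => (b m : ℝ) * x ^ m)
      ((1 - Real.sqrt (1 - 4 * x)) / (2 * x * Real.sqrt (1 - 4 * x))) := by
  set s := Real.sqrt (1 - 4 * x) with hs_def
  have hs_pos : 0 < s := Real.sqrt_pos.2 (by linarith)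
  have hs_sq : s ^ 2 = 1 - 4 * x := Real.sq_sqrt (by linarith)
  have sumA := summable_aux hx0.le hx cb_le
  have sumB := summable_aux hx0.le hx b_le
  have sumC := summable_aux hx0.le hx catalan_le
  have normA : Summable (fun m => ‖(Nat.centralBinom m : ℝ) * x ^ m‖) :=
    summable_norm_iff.mpr sumA
  have normC : Summable (fun m => ‖(catalan m : ℝ) * x ^ m‖) := summable_norm_iff.mpr sumC
  set G := ∑' m, (Nat.centralBinom m : ℝ) * x ^ m with hG_def
  set F := ∑' m, (b m : ℝ) * x ^ m with hF_def
  set C := ∑' m, (catalan m : ℝ) * x ^ m with hC_def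
  -- G * G = 1 / (1 - 4x)
  have hGG : G * G = (1 - 4 * x)⁻¹ := by
    rw [hG_def, tsum_mul_tsum_eq_tsum_sum_range_of_summable_norm normA normA]
    have heq : ∀ n : ℕ, (∑ k ∈ range (n + 1),
        ((Nat.centralBinom k : ℝ) * x ^ k) * ((Nat.centralBinom (n - k) : ℝ) * x ^ (n - k))) =
        (4 * x) ^ n := by
      intro n
      have : ∀ k ∈ range (n + 1),
          ((Nat.centralBinom k : ℝ) * x ^ k) * ((Nat.centralBinom (n - k) : ℝ) * x ^ (n - k)) =
          ((Nat.centralBinom k * Nat.centralBinom (n - k) : ℕ) : ℝ) * x ^ n := by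
        intro k hk
        simp only [Finset.mem_range] at hk
        push_cast
        rw [show ((Nat.centralBinom k : ℝ) * x ^ k) * ((Nat.centralBinom (n - k) : ℝ) *
          x ^ (n - k)) = (Nat.centralBinom k : ℝ) * (Nat.centralBinom (n - k)) *
          (x ^ k * x ^ (n - k)) from by ring, ← pow_add, show k + (n - k) = n by omega]
      rw [Finset.sum_congr rfl this, ← Finset.sum_mul, ← Nat.cast_sum]
      have : (∑ k ∈ range (n + 1), Nat.centralBinom k * Nat.centralBinom (n - k)) = 4 ^ n :=
        S_eq n
      rw [this]
      push_cast
      rw [mul_pow]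
    rw [tsum_congr heq, tsum_geometric_of_lt_one (by linarith) (by linarith)]
  have hG1 : 1 ≤ G := by
    have h0 : ((Nat.centralBinom 0 : ℝ) * x ^ 0) ≤ G :=
      Summable.le_tsum sumA 0 (fun i _ => by positivity)
    simpa [Nat.centralBinom] using h0
  have hGs : G * s = 1 := by
    have hsq : (G * s) ^ 2 = 1 := by
      rw [mul_pow, hs_sq, show G ^ 2 = G * G from sq G, hGG]
      exact inv_mul_cancel₀ (by linarith)
    have h1 : G * s = Real.sqrt ((G * s) ^ 2) := (Real.sqrt_sq (by positivity)).symm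
    rw [hsq, Real.sqrt_one] at h1
    exact h1
  -- C * G = F
  have hCG : C * G = F := by
    rw [hC_def, hG_def, tsum_mul_tsum_eq_tsum_sum_range_of_summable_norm normC normA, hF_def]
    apply tsum_congr
    intro n
    have : ∀ k ∈ range (n + 1),
        ((catalan k : ℝ) * x ^ k) * ((Nat.centralBinom (n - k) : ℝ) * x ^ (n - k)) =
        ((catalan k * Nat.centralBinom (n - k) : ℕ) : ℝ) * x ^ n := by
      intro k hk
      simp only [Finset.mem_range] at hk
      push_cast
      rw [show ((catalan k : ℝ) * x ^ k) * ((Nat.centralBinom (n - k) : ℝ) * x ^ (n - k)) =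
        (catalan k : ℝ) * (Nat.centralBinom (n - k)) * (x ^ k * x ^ (n - k)) from by ring,
        ← pow_add, show k + (n - k) = n by omega]
    rw [Finset.sum_congr rfl this, ← Finset.sum_mul, ← Nat.cast_sum]
    have hT : (∑ k ∈ range (n + 1), catalan k * Nat.centralBinom (n - k)) = b n := T_eq n
    rw [hT]
  -- F + C = 2 * G
  have hFC : F + C = 2 * G := by
    rw [hF_def, hC_def, ← Summable.tsum_add sumB sumC, hG_def, ← tsum_mul_left]
    apply tsum_congr
    intro m
    have := I2 m
    have h2 : (b m : ℝ) + (catalan m : ℝ) = 2 * (Nat.centralBinom m : ℝ) := by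
      exact_mod_cast congrArg (Nat.cast : ℕ → ℝ) this
    linear_combination x ^ m * h2
  -- solve
  have hF : F * (1 + G) = 2 * (G * G) := by linear_combination G * hFC - hCG
  have h1G : (0 : ℝ) < 1 + G := by linarith
  have hFval : F = (1 - s) / (2 * x * s) := by
    have h2xs : (2 * x * s) ≠ 0 := by positivity
    rw [eq_div_iff h2xs]
    -- F * (2*x*s) = 1 - s ; use G = 1/s, 4x = 1 - s²
    have hG_eq : G = s⁻¹ := by
      field_simp
      linear_combination hGs
    rw [hG_eq] at hF
    have hs_ne : s ≠ 0 := ne_of_gt hs_pos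
    field_simp at hF
    -- hF : F * (s + 1) * (s * s) = 2 * s
    have hF2 : F * (s + 1) * s = 2 := by
      apply mul_left_cancel₀ hs_ne
      linear_combination s * hF
    linear_combination ((1 - s) / 2) * hF2 + (F * s / 2) * hs_sq
  rw [← hFval]
  exact sumB.hasSum

lemma Bcoef_eq (l m : ℕ) : BcoefP1 l m = (l + (2 * m + 1)).choose (2 * m + 1) * b m := by
  have h1 := Nat.choose_mul_factorial_mul_factorial (show 2 * m + 1 ≤ l + (2 * m + 1) by omega)
  rw [Nat.add_sub_cancel] at h1
  have h2 : b m * m.factorial * (m + 1).factorial = (2 * m + 1).factorial := by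
    have := Nat.choose_mul_factorial_mul_factorial (show m ≤ 2 * m + 1 by omega)
    rw [show 2 * m + 1 - m = m + 1 by omega] at this
    exact this
  have hnum : (l + 2 * m + 1).factorial =
      ((l + (2 * m + 1)).choose (2 * m + 1) * b m) *
        (l.factorial * m.factorial * (m + 1).factorial) := by
    rw [show l + 2 * m + 1 = l + (2 * m + 1) by omega, ← h1, ← h2]
    ring
  unfold BcoefP1
  rw [hnum, Nat.mul_div_cancel]
  exact Nat.mul_pos (Nat.mul_pos l.factorial_pos m.factorial_pos) (m + 1).factorial_pos

lemma inner_hasSum {L : ℝ} (hL0 : 0 ≤ L) (hL1 : L < 1) (R : ℝ) (m : ℕ) :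
    HasSum (fun l => (BcoefP1 l m : ℝ) * L ^ l * R ^ m)
      (1 / (1 - L) ^ (2 * m + 1 + 1) * ((b m : ℝ) * R ^ m)) := by
  have hnorm : ‖L‖ < 1 := by rw [Real.norm_eq_abs, abs_of_nonneg hL0]; exact hL1
  have base := hasSum_choose_mul_geometric_of_norm_lt_one (𝕜 := ℝ) (2 * m + 1) hnorm
  have h := base.mul_right ((b m : ℝ) * R ^ m)
  have hfun : (fun l => (BcoefP1 l m : ℝ) * L ^ l * R ^ m) =
      fun i => ((i + (2 * m + 1)).choose (2 * m + 1) : ℝ) * L ^ i * ((b m : ℝ) * R ^ m) := by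
    funext l
    rw [Bcoef_eq]
    push_cast
    ring
  rw [hfun]
  exact h


end MotzkinAux


open MotzkinAux in
/-- For `L ≥ 0`, `R > 0` with `L + 2√R < 1`, the family `B^{(+1)}_{ℓ,m}·L^ℓ·R^m` is
summable with sum `(1 − L − √((1−L)² − 4R)) / (2R·√((1−L)² − 4R))`. -/
theorem bridge_plus_one_gf_value (L R : ℝ) (hL : 0 ≤ L) (hR : 0 < R)
    (h : L + 2 * Real.sqrt R < 1) :
    Summable (fun p : ℕ × ℕ => (BcoefP1 p.1 p.2 : ℝ) * L ^ p.1 * R ^ p.2) ∧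
      ∑' p : ℕ × ℕ, (BcoefP1 p.1 p.2 : ℝ) * L ^ p.1 * R ^ p.2 =
        (1 - L - Real.sqrt ((1 - L) ^ 2 - 4 * R)) /
          (2 * R * Real.sqrt ((1 - L) ^ 2 - 4 * R)) := by
  have hsR : 0 < Real.sqrt R := Real.sqrt_pos.2 hR
  have hL1 : L < 1 := by linarith
  set u : ℝ := 1 - L with hu_def
  have hu : 0 < u := by simp only [hu_def]; linarith
  have h2R : 2 * Real.sqrt R < u := by simp only [hu_def]; linarith
  have h4R : 4 * R < u ^ 2 := by
    have hsq : (2 * Real.sqrt R) ^ 2 < u ^ 2 :=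
      pow_lt_pow_left₀ h2R (by positivity) (by norm_num)
    calc 4 * R = (2 * Real.sqrt R) ^ 2 := by
          rw [mul_pow, Real.sq_sqrt hR.le]; ring
      _ < u ^ 2 := hsq
  set x : ℝ := R / u ^ 2 with hx_def
  have hx0 : 0 < x := div_pos hR (by positivity)
  have hx4 : x < 1 / 4 := by
    rw [hx_def, div_lt_iff₀ (by positivity)]
    nlinarith [h4R]
  set s : ℝ := Real.sqrt (1 - 4 * x) with hs_def
  have hs_pos : 0 < s := Real.sqrt_pos.2 (by linarith)
  have hs_sq : s ^ 2 = 1 - 4 * x := Real.sq_sqrt (by linarith)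
  have hDs : Real.sqrt (u ^ 2 - 4 * R) = u * s := by
    rw [show u ^ 2 - 4 * R = u ^ 2 * (1 - 4 * x) from by
      rw [hx_def]; field_simp]
    rw [Real.sqrt_mul (by positivity), Real.sqrt_sq hu.le]
  -- rows
  have hrow : ∀ m : ℕ, HasSum (fun l => (BcoefP1 l m : ℝ) * L ^ l * R ^ m)
      (1 / u ^ (2 * m + 1 + 1) * ((b m : ℝ) * R ^ m)) := fun m =>
    inner_hasSum hL hL1 R m
  -- row values simplification
  have hrow_val : ∀ m : ℕ, 1 / u ^ (2 * m + 1 + 1) * ((b m : ℝ) * R ^ m) =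
      (b m : ℝ) * x ^ m / u ^ 2 := by
    intro m
    rw [hx_def, div_pow, ← pow_mul]
    have hune : u ≠ 0 := ne_of_gt hu
    field_simp
    try ring
    try exact Or.inl trivial
  -- outer sum
  have houter : HasSum (fun m => (b m : ℝ) * x ^ m / u ^ 2)
      ((1 - s) / (2 * x * s) / u ^ 2) :=
    (hasSum_b_series hx0 hx4).div_const _
  have hval : (1 - s) / (2 * x * s) / u ^ 2 =
      (1 - L - Real.sqrt ((1 - L) ^ 2 - 4 * R)) /
        (2 * R * Real.sqrt ((1 - L) ^ 2 - 4 * R)) := by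
    rw [show (1 : ℝ) - L = u from rfl, hDs, hx_def]
    have hune : u ≠ 0 := ne_of_gt hu
    have hsne : s ≠ 0 := ne_of_gt hs_pos
    have hRne : R ≠ 0 := ne_of_gt hR
    field_simp
  -- assembly
  set f : ℕ × ℕ → ℝ := fun p => (BcoefP1 p.1 p.2 : ℝ) * L ^ p.1 * R ^ p.2 with hf_def
  set g : ℕ × ℕ → ℝ := fun q => f (q.2, q.1) with hg_def
  have hg_nonneg : ∀ q : ℕ × ℕ, 0 ≤ g q := fun q => by
    simp only [hg_def, hf_def]
    positivity
  have hg_rows : ∀ m : ℕ, Summable fun l => g (m, l) := fun m => (hrow m).summable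
  have hg_rowsum : ∀ m : ℕ, (∑' l, g (m, l)) = (b m : ℝ) * x ^ m / u ^ 2 := fun m => by
    rw [(hrow m).tsum_eq, hrow_val m]
  have hg_sum : Summable g := by
    rw [summable_prod_of_nonneg hg_nonneg]
    refine ⟨hg_rows, ?_⟩
    apply houter.summable.congr
    intro m
    exact (hg_rowsum m).symm
  have e := Equiv.prodComm ℕ ℕ
  have hf_sum : Summable f := by
    have : Summable (f ∘ (Equiv.prodComm ℕ ℕ)) := by
      apply hg_sum.congr
      intro q
      rfl
    exact (Equiv.prodComm ℕ ℕ).summable_iff.mp this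
  refine ⟨hf_sum, ?_⟩
  have htsum : ∑' p, f p = ∑' q, g q := by
    rw [← (Equiv.prodComm ℕ ℕ).tsum_eq f]
    apply tsum_congr
    intro q
    rfl
  rw [htsum, Summable.tsum_prod' hg_sum hg_rows]
  calc ∑' m, ∑' l, g (m, l) = ∑' m, (b m : ℝ) * x ^ m / u ^ 2 := tsum_congr hg_rowsum
    _ = (1 - s) / (2 * x * s) / u ^ 2 := houter.tsum_eq
    _ = _ := hval
end

section
/- For all ℓ, m ∈ ℕ: Br(ℓ, m) = [ℓ = 0 and m = 0] + [ℓ ≥ 1]·Br(ℓ−1, m) + 2·Σ_{ℓ₁+ℓ₂ = ℓ} Σ_{m₁+m₂ = m−1} Exc(ℓ₁, m₁)·Br(ℓ₂, m₂), where [P] is 1 if P holds and 0 otherwise, and the double sum is empty when m = 0. (This is the coefficient form of the equation B = 1 + (t + 2uE)B for the generating function of Motzkin bridges.) -/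
/-- A Motzkin word is a list with entries in `{-1, 0, +1} ⊆ ℤ`. -/
def IsMotzkinWord (w : List ℤ) : Prop := ∀ x ∈ w, x = -1 ∨ x = 0 ∨ x = 1

/-- Motzkin bridges with `ℓ` level steps, `m` down steps and `m` up steps. -/
def MotzkinBridge (l m : ℕ) : Set (List ℤ) :=
  {w | IsMotzkinWord w ∧ w.count 0 = l ∧ w.count (-1) = m ∧ w.count 1 = m}

/-- Motzkin excursions: bridges all of whose prefix sums are nonnegative. -/
def MotzkinExcursion (l m : ℕ) : Set (List ℤ) :=
  {w | w ∈ MotzkinBridge l m ∧ ∀ p : List ℤ, p <+: w → 0 ≤ p.sum}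

/-- Motzkin paths from `0` to `+1` with `ℓ` level steps, `m` down steps and `m+1`
up steps. -/
def MotzkinPathUp (l m : ℕ) : Set (List ℤ) :=
  {w | IsMotzkinWord w ∧ w.count 0 = l ∧ w.count (-1) = m ∧ w.count 1 = m + 1}

/-- The number `Br(ℓ, m)` of Motzkin bridges with parameters `(ℓ, m)`. -/
noncomputable def Br (l m : ℕ) : ℕ := Nat.card (MotzkinBridge l m)

/-- The number `Exc(ℓ, m)` of Motzkin excursions with parameters `(ℓ, m)`. -/
noncomputable def Exc (l m : ℕ) : ℕ := Nat.card (MotzkinExcursion l m)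

/-- The number of Motzkin paths from `0` to `+1` with parameters `(ℓ, m)`. -/
noncomputable def BrUp (l m : ℕ) : ℕ := Nat.card (MotzkinPathUp l m)

open List Finset

lemma motzkin_sum (w : List ℤ) (hw : IsMotzkinWord w) :
    w.sum = (w.count 1 : ℤ) - (w.count (-1) : ℤ) := by
  induction w with
  | nil => simp
  | cons a t ih =>
    have ht : IsMotzkinWord t := fun x hx => hw x (mem_cons_of_mem _ hx)
    rcases hw a List.mem_cons_self with h|h|h <;> subst h <;>
      simp [List.count_cons, ih ht] <;> ring

lemma bridge_finite (l m : ℕ) : (MotzkinBridge l m).Finite := by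
  classical
  set L : List ℤ := replicate l 0 ++ replicate m (-1) ++ replicate m 1 with hL
  apply Set.Finite.subset (Set.finite_mem_finset L.permutations.toFinset)
  intro w hw
  simp only [Set.mem_setOf_eq, List.mem_toFinset, mem_permutations]
  rw [perm_iff_count]
  intro x
  obtain ⟨hm, h0, hneg, h1⟩ := hw
  by_cases hx : x = -1 ∨ x = 0 ∨ x = 1
  · rcases hx with h|h|h <;> subst h <;>
      simp [hL, count_append, count_replicate, h0, hneg, h1]
  · push_neg at hx
    rw [count_eq_zero_of_not_mem (fun hmem => by rcases hm x hmem with h|h|h <;> simp [h] at hx),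
      count_eq_zero_of_not_mem (by simp [hL, mem_replicate]; tauto)]

lemma exc_finite (l m : ℕ) : (MotzkinExcursion l m).Finite :=
  (bridge_finite l m).subset fun _ h => h.1

noncomputable def FB (l m : ℕ) : Finset (List ℤ) := (bridge_finite l m).toFinset
noncomputable def FE (l m : ℕ) : Finset (List ℤ) := (exc_finite l m).toFinset

lemma mem_FB {l m : ℕ} {w : List ℤ} : w ∈ FB l m ↔ w ∈ MotzkinBridge l m :=
  Set.Finite.mem_toFinset _

lemma mem_FE {l m : ℕ} {w : List ℤ} : w ∈ FE l m ↔ w ∈ MotzkinExcursion l m :=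
  Set.Finite.mem_toFinset _

lemma Br_eq (l m : ℕ) : Br l m = (FB l m).card := by
  rw [Br, Nat.card_coe_set_eq, Set.ncard_eq_toFinset_card _ (bridge_finite l m)]
  rfl

lemma Exc_eq (l m : ℕ) : Exc l m = (FE l m).card := by
  rw [Exc, Nat.card_coe_set_eq, Set.ncard_eq_toFinset_card _ (exc_finite l m)]
  rfl

lemma Br_zero (l : ℕ) : Br l 0 = 1 := by
  have hset : MotzkinBridge l 0 = {replicate l (0:ℤ)} := by
    ext w
    constructor
    · rintro ⟨hm, h0, hneg, h1⟩
      have hall : ∀ x ∈ w, x = 0 := by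
        intro x hx
        rcases hm x hx with h|h|h
        · exact absurd (h ▸ hx) (count_eq_zero.mp hneg)
        · exact h
        · exact absurd (h ▸ hx) (count_eq_zero.mp h1)
      have hlen : w.length = l := by
        rw [← h0, List.count_eq_length.mpr (fun b hb => (hall b hb).symm)]
      exact List.eq_replicate_iff.mpr ⟨hlen, hall⟩
    · rintro rfl
      refine ⟨fun x hx => ?_, ?_, ?_, ?_⟩
      · right; left; exact List.eq_of_mem_replicate hx
      · simp [count_replicate]
      · rw [count_eq_zero_of_not_mem (by simp [mem_replicate])]
      · rw [count_eq_zero_of_not_mem (by simp [mem_replicate])]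
  rw [Br, hset, Nat.card_coe_set_eq, Set.ncard_singleton]

lemma exc_sum {l m : ℕ} {e : List ℤ} (he : e ∈ MotzkinExcursion l m) : e.sum = 0 := by
  obtain ⟨⟨hm, h0, hn, h1⟩, hp⟩ := he
  rw [motzkin_sum e hm, hn, h1, sub_self]

lemma exists_decomp (t : List ℤ) (ht : ∀ x ∈ t, x = -1 ∨ x = 0 ∨ x = 1) (hsum : t.sum < 0) :
    ∃ e b, t = e ++ (-1) :: b ∧ (∀ p, p <+: e → 0 ≤ p.sum) ∧ e.sum = 0 := by
  classical
  have hex : ∃ k, ((t.take k).sum < 0) := ⟨t.length, by simpa using hsum⟩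
  set k := Nat.find hex with hkdef
  have hk : (t.take k).sum < 0 := Nat.find_spec hex
  have hmin : ∀ j < k, ¬ (t.take j).sum < 0 := fun j hj => Nat.find_min hex hj
  have hk1 : 1 ≤ k := by
    rcases Nat.eq_zero_or_pos k with h|h
    · rw [h] at hk; simp at hk
    · exact h
  have hklen : k ≤ t.length := by
    by_contra h
    push_neg at h
    exact hmin t.length h (by simpa using hsum)
  have hlt : k - 1 < t.length := by omega
  have hstep : (t.take k).sum = (t.take (k-1)).sum + t.get ⟨k-1, hlt⟩ := by
    have h2 := List.sum_take_succ t (k-1) hlt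
    rwa [Nat.sub_add_cancel hk1] at h2
  have hprev : 0 ≤ (t.take (k-1)).sum := le_of_not_gt (hmin (k-1) (by omega))
  have ha := ht (t.get ⟨k-1,hlt⟩) (List.get_mem t ⟨k-1, hlt⟩)
  have hae : t.get ⟨k-1,hlt⟩ = -1 ∧ (t.take (k-1)).sum = 0 := by
    rcases ha with h|h|h <;> rw [h] at hstep <;> omega
  refine ⟨t.take (k-1), t.drop k, ?_, ?_, hae.2⟩
  · conv_lhs => rw [← List.take_append_drop (k-1) t]
    rw [List.drop_eq_getElem_cons hlt]
    rw [Nat.sub_add_cancel hk1]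
    simp [← hae.1]
  · intro p hp
    rw [List.prefix_iff_eq_take] at hp
    have hple : p.length ≤ k - 1 := by
      have h3 : p.length = min p.length (min (k-1) t.length) := by
        conv_lhs => rw [hp]
        simp [List.length_take]
      omega
    rw [hp, List.take_take]
    have := le_of_not_gt (hmin (min p.length (k-1)) (by omega))
    simpa using this

lemma decomp_len_aux {e b e' b' : List ℤ}
    (h : e ++ (-1:ℤ) :: b = e' ++ (-1:ℤ) :: b')
    (hes : e.sum = 0) (he' : ∀ p, p <+: e' → 0 ≤ p.sum)
    (hl : e.length < e'.length) : False := by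
  have hp1 : e ++ [(-1:ℤ)] <+: e' ++ (-1) :: b' := by
    refine ⟨b, ?_⟩
    rw [← h]
    simp
  have hp2 : e' <+: e' ++ (-1) :: b' := List.prefix_append _ _
  have hp : e ++ [(-1:ℤ)] <+: e' :=
    List.prefix_of_prefix_length_le hp1 hp2 (by simp; omega)
  have := he' _ hp
  simp [List.sum_append, hes] at this

lemma decomp_unique {e b e' b' : List ℤ}
    (h : e ++ (-1:ℤ) :: b = e' ++ (-1:ℤ) :: b')
    (he : ∀ p, p <+: e → 0 ≤ p.sum) (hes : e.sum = 0)
    (he' : ∀ p, p <+: e' → 0 ≤ p.sum) (hes' : e'.sum = 0) :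
    e = e' ∧ b = b' := by
  have hlen : e.length = e'.length := by
    by_contra hne
    rcases Nat.lt_or_ge e.length e'.length with hl|hl
    · exact decomp_len_aux h hes he' hl
    · exact decomp_len_aux h.symm hes' he (by omega)
  obtain ⟨h1, h2⟩ := List.append_inj h hlen
  exact ⟨h1, by simpa using h2⟩

noncomputable def blockF (pq : (ℕ × ℕ) × (ℕ × ℕ)) : Finset (List ℤ) :=
  ((FE pq.1.1 pq.2.1) ×ˢ (FB pq.1.2 pq.2.2)).image
    (fun eb : List ℤ × List ℤ => 1 :: (eb.1 ++ (-1) :: eb.2))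

lemma card_blockF (pq : (ℕ × ℕ) × (ℕ × ℕ)) :
    (blockF pq).card = Exc pq.1.1 pq.2.1 * Br pq.1.2 pq.2.2 := by
  rw [blockF, Finset.card_image_of_injOn, Finset.card_product, Exc_eq, Br_eq]
  rintro ⟨e, b⟩ hx ⟨e', b'⟩ hy hxy
  simp only [Finset.mem_coe, Finset.mem_product, mem_FE, mem_FB] at hx hy
  simp only [List.cons.injEq, true_and] at hxy
  obtain ⟨h1, h2⟩ := decomp_unique hxy hx.1.2 (exc_sum hx.1) hy.1.2 (exc_sum hy.1)
  simp [h1, h2]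

lemma blockF_disjoint {pq pq' : (ℕ × ℕ) × (ℕ × ℕ)} (h : pq ≠ pq') :
    Disjoint (blockF pq) (blockF pq') := by
  rw [Finset.disjoint_left]
  rintro w hw hw'
  simp only [blockF, Finset.mem_image, Finset.mem_product, mem_FE, mem_FB] at hw hw'
  obtain ⟨⟨e, b⟩, ⟨he, hb⟩, hweq⟩ := hw
  obtain ⟨⟨e', b'⟩, ⟨he', hb'⟩, hweq'⟩ := hw'
  rw [← hweq'] at hweq
  simp only [List.cons.injEq, true_and] at hweq
  obtain ⟨h1, h2⟩ := decomp_unique hweq he.2 (exc_sum he) he'.2 (exc_sum he')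
  subst h1; subst h2
  apply h
  obtain ⟨⟨_, e0, _, e1⟩, _⟩ := he
  obtain ⟨⟨_, e0', _, e1'⟩, _⟩ := he'
  obtain ⟨_, b0, _, b1⟩ := hb
  obtain ⟨_, b0', _, b1'⟩ := hb'
  ext <;> omega

lemma P1_eq (l m : ℕ) (hm : 1 ≤ m) :
    (FB l m).filter (fun w => w.head? = some 1) =
      (Finset.HasAntidiagonal.antidiagonal l ×ˢ Finset.HasAntidiagonal.antidiagonal (m - 1)).biUnion blockF := by
  ext w
  simp only [Finset.mem_filter, Finset.mem_biUnion, Finset.mem_product,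
    Finset.HasAntidiagonal.mem_antidiagonal, mem_FB]
  constructor
  · rintro ⟨hwB, hhead⟩
    obtain ⟨a, t, rfl⟩ : ∃ a t, w = a :: t := by
      cases w with
      | nil => simp at hhead
      | cons a t => exact ⟨a, t, rfl⟩
    have ha : a = 1 := by simpa using hhead
    subst ha
    obtain ⟨hmw, h0, hn, h1⟩ := hwB
    have ht : IsMotzkinWord t := fun x hx => hmw x (mem_cons_of_mem _ hx)
    have htsum : t.sum < 0 := by
      have hws := motzkin_sum _ hmw
      rw [hn, h1, sub_self] at hws
      simp only [List.sum_cons] at hws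
      omega
    obtain ⟨e, b, rfl, hpre, hesum⟩ := exists_decomp t ht htsum
    have hme : IsMotzkinWord e := fun x hx => ht x (by simp [hx])
    have hmb : IsMotzkinWord b := fun x hx => ht x (by simp [hx])
    have hcc : e.count (-1) = e.count 1 := by
      have := motzkin_sum e hme
      rw [hesum] at this
      omega
    have hc0 : e.count 0 + b.count 0 = l := by
      simp only [List.count_cons, List.count_append] at h0
      norm_num at h0
      omega
    have hcn : e.count (-1) + (b.count (-1) + 1) = m := by
      simp only [List.count_cons, List.count_append] at hn
      norm_num at hn
      omega
    have hc1 : e.count 1 + b.count 1 + 1 = m := by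
      simp only [List.count_cons, List.count_append] at h1
      norm_num at h1
      omega
    refine ⟨((e.count 0, b.count 0), (e.count 1, b.count 1)),
      ⟨hc0, show e.count 1 + b.count 1 = m - 1 by omega⟩, ?_⟩
    simp only [blockF, Finset.mem_image, Finset.mem_product, mem_FE, mem_FB]
    exact ⟨(e, b), ⟨⟨⟨hme, rfl, hcc, rfl⟩, hpre⟩, ⟨hmb, rfl, show b.count (-1) = b.count 1 by omega, rfl⟩⟩, rfl⟩
  · rintro ⟨⟨⟨l₁, l₂⟩, ⟨m₁, m₂⟩⟩, ⟨hl, hmq⟩, hwmem⟩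
    dsimp only at hl hmq
    simp only [blockF, Finset.mem_image, Finset.mem_product, mem_FE, mem_FB] at hwmem
    obtain ⟨⟨e, b⟩, ⟨⟨⟨hme, e0, en, e1⟩, hpre⟩, ⟨hmb, b0, bn, b1⟩⟩, rfl⟩ := hwmem
    dsimp only at e0 en e1 b0 bn b1 ⊢
    refine ⟨⟨?_, ?_, ?_, ?_⟩, rfl⟩
    · intro x hx
      simp only [List.mem_cons, List.mem_append] at hx
      rcases hx with rfl | (hx | hx)
      · right; right; rfl
      · exact hme x hx
      · rcases hx with rfl | hx
        · left; rfl
        · exact hmb x hx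
    · simp only [List.count_cons, List.count_append]
      norm_num
      omega
    · simp only [List.count_cons, List.count_append]
      norm_num
      omega
    · simp only [List.count_cons, List.count_append]
      norm_num
      omega

lemma P0_card (l m : ℕ) :
    ((FB l m).filter (fun w => w.head? = some 0)).card =
      if 1 ≤ l then Br (l - 1) m else 0 := by
  split_ifs with hl
  · rw [Br_eq]
    have himg : (FB l m).filter (fun w => w.head? = some 0)
        = (FB (l - 1) m).image (List.cons 0) := by
      ext w
      simp only [Finset.mem_filter, Finset.mem_image, mem_FB]
      constructor
      · rintro ⟨⟨hmw, h0, hn, h1⟩, hhead⟩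
        obtain ⟨a, t, rfl⟩ : ∃ a t, w = a :: t := by
          cases w with
          | nil => simp at hhead
          | cons a t => exact ⟨a, t, rfl⟩
        have ha : a = 0 := by simpa using hhead
        subst ha
        refine ⟨t, ⟨fun x hx => hmw x (List.mem_cons_of_mem _ hx), ?_, ?_, ?_⟩, rfl⟩ <;>
          simp only [List.count_cons] at h0 hn h1 <;>
          norm_num at h0 hn h1 ⊢ <;> omega
      · rintro ⟨t, ⟨hmw, h0, hn, h1⟩, rfl⟩
        refine ⟨⟨?_, ?_, ?_, ?_⟩, rfl⟩
        · intro x hx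
          rcases List.mem_cons.mp hx with rfl | hx
          · right; left; rfl
          · exact hmw x hx
        all_goals simp only [List.count_cons] <;> norm_num <;> omega
    rw [himg, Finset.card_image_of_injective _ (fun x y hxy => by simpa using hxy)]
  · rw [Finset.card_eq_zero, Finset.eq_empty_iff_forall_notMem]
    intro w hw
    simp only [Finset.mem_filter, mem_FB] at hw
    obtain ⟨⟨hmw, h0, hn, h1⟩, hhead⟩ := hw
    have h0mem : (0:ℤ) ∈ w := by
      cases w with
      | nil => simp at hhead
      | cons a t =>
        have : a = 0 := by simpa using hhead
        simp [this]
    have := List.count_pos_iff.mpr h0mem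
    omega

lemma neg_mem_FB {l m : ℕ} {w : List ℤ} (h : w ∈ FB l m) : w.map Neg.neg ∈ FB l m := by
  rw [mem_FB] at *
  obtain ⟨hmw, h0, hn, h1⟩ := h
  refine ⟨?_, ?_, ?_, ?_⟩
  · intro x hx
    obtain ⟨y, hy, rfl⟩ := List.mem_map.mp hx
    rcases hmw y hy with rfl | rfl | rfl <;> norm_num
  · have := List.count_map_of_injective w Neg.neg neg_injective 0
    simpa using this.trans h0
  · have := List.count_map_of_injective w Neg.neg neg_injective 1
    simpa using this.trans h1
  · have := List.count_map_of_injective w Neg.neg neg_injective (-1)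
    simpa using this.trans hn

lemma PN_card (l m : ℕ) :
    ((FB l m).filter (fun w => w.head? = some (-1))).card =
    ((FB l m).filter (fun w => w.head? = some 1)).card := by
  have himg : (FB l m).filter (fun w => w.head? = some (-1))
      = ((FB l m).filter (fun w => w.head? = some 1)).image (List.map Neg.neg) := by
    ext w
    simp only [Finset.mem_filter, Finset.mem_image]
    constructor
    · rintro ⟨hwB, hhead⟩
      refine ⟨w.map Neg.neg, ⟨neg_mem_FB hwB, ?_⟩, ?_⟩
      · rw [List.head?_map, hhead]
        norm_num
      · rw [List.map_map]
        have : (Neg.neg ∘ Neg.neg : ℤ → ℤ) = id := by funext x; simp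
        rw [this, List.map_id]
    · rintro ⟨v, ⟨hvB, hvhead⟩, rfl⟩
      refine ⟨neg_mem_FB hvB, ?_⟩
      rw [List.head?_map, hvhead]
      norm_num
  rw [himg, Finset.card_image_of_injective _ (List.map_injective_iff.mpr neg_injective)]

lemma FB_split (l m : ℕ) (hm : 1 ≤ m) :
    (FB l m).card = ((FB l m).filter (fun w => w.head? = some 0)).card
      + ((FB l m).filter (fun w => w.head? = some 1)).card
      + ((FB l m).filter (fun w => w.head? = some (-1))).card := by
  have disj01 : Disjoint ((FB l m).filter (fun w => w.head? = some 0))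
      ((FB l m).filter (fun w => w.head? = some 1)) := by
    rw [Finset.disjoint_left]
    intro w hw hw'
    simp only [Finset.mem_filter] at hw hw'
    rw [hw.2] at hw'
    simp at hw'
  have disjN : Disjoint ((FB l m).filter (fun w => w.head? = some 0)
        ∪ (FB l m).filter (fun w => w.head? = some 1))
      ((FB l m).filter (fun w => w.head? = some (-1))) := by
    rw [Finset.disjoint_left]
    intro w hw hw'
    simp only [Finset.mem_union, Finset.mem_filter] at hw hw'
    rcases hw with hw | hw <;> rw [hw.2] at hw' <;> simp at hw'
  have hsplit : FB l m = ((FB l m).filter (fun w => w.head? = some 0)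
      ∪ (FB l m).filter (fun w => w.head? = some 1))
      ∪ (FB l m).filter (fun w => w.head? = some (-1)) := by
    ext w
    simp only [Finset.mem_union, Finset.mem_filter]
    constructor
    · intro hw
      have hne : w ≠ [] := by
        rintro rfl
        obtain ⟨_, _, _, h1⟩ := mem_FB.mp hw
        simp at h1
        omega
      obtain ⟨a, t, rfl⟩ := List.exists_cons_of_ne_nil hne
      rcases (mem_FB.mp hw).1 a List.mem_cons_self with rfl | rfl | rfl
      · exact Or.inr ⟨hw, rfl⟩
      · exact Or.inl (Or.inl ⟨hw, rfl⟩)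
      · exact Or.inl (Or.inr ⟨hw, rfl⟩)
    · rintro ((⟨h, _⟩ | ⟨h, _⟩) | ⟨h, _⟩) <;> exact h
  conv_lhs => rw [hsplit]
  rw [Finset.card_union_of_disjoint disjN, Finset.card_union_of_disjoint disj01]


/-- Coefficient form of `B = 1 + (t + 2uE)B` for Motzkin bridges. -/
theorem bridge_recurrence (l m : ℕ) :
    Br l m =
      (if l = 0 ∧ m = 0 then 1 else 0) +
        (if 1 ≤ l then Br (l - 1) m else 0) +
        2 * (if 1 ≤ m then
          ∑ p ∈ Finset.HasAntidiagonal.antidiagonal l, ∑ q ∈ Finset.HasAntidiagonal.antidiagonal (m - 1),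
            Exc p.1 q.1 * Br p.2 q.2
        else 0) := by
  rcases Nat.eq_zero_or_pos m with rfl | hm
  · rcases Nat.eq_zero_or_pos l with rfl | hl
    · simp [Br_zero]
    · rw [Br_zero, Br_zero]
      rw [if_neg (by omega), if_pos (show 1 ≤ l from hl), if_neg (by omega)]
  · rw [if_neg (by omega), if_pos (show 1 ≤ m from hm)]
    rw [Br_eq, FB_split l m (show 1 ≤ m from hm), P0_card, PN_card, P1_eq l m (show 1 ≤ m from hm),
      Finset.card_biUnion (fun x _ y _ hxy => blockF_disjoint hxy)]
    have hsum : ∑ pq ∈ (Finset.HasAntidiagonal.antidiagonal l ×ˢ Finset.HasAntidiagonal.antidiagonal (m-1)), (blockF pq).card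
        = ∑ p ∈ Finset.HasAntidiagonal.antidiagonal l, ∑ q ∈ Finset.HasAntidiagonal.antidiagonal (m-1),
            Exc p.1 q.1 * Br p.2 q.2 := by
      rw [Finset.sum_product]
      exact Finset.sum_congr rfl fun p _ => Finset.sum_congr rfl fun q _ => card_blockF (p, q)
    rw [hsum]
    ring
end

section
/- Let t, u be real numbers with t ≥ 0, u > 0 and t + 2√u < 1. Then the family (ℓ, m) ∈ ℕ×ℕ ↦ Exc(ℓ, m)·t^ℓ·u^m is summable and Σ_{ℓ,m ≥ 0} Exc(ℓ, m)·t^ℓ·u^m = (1 − t − √((1−t)² − 4u)) / (2u). -/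
namespace MotzkinAux

lemma word_tail {x : ℤ} {v : List ℤ} (h : IsMotzkinWord (x :: v)) : IsMotzkinWord v :=
  fun y hy => h y (List.mem_cons_of_mem _ hy)

lemma word_head {x : ℤ} {v : List ℤ} (h : IsMotzkinWord (x :: v)) : x = -1 ∨ x = 0 ∨ x = 1 :=
  h x List.mem_cons_self

lemma mot_length {w : List ℤ} (hw : IsMotzkinWord w) :
    w.length = w.count 0 + w.count (-1) + w.count 1 := by
  induction w with
  | nil => simp
  | cons x v ih =>
    have hx := word_head hw
    have ihv := ih (word_tail hw)
    rcases hx with h | h | h <;> subst h <;>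
      simp [List.count_cons, ihv] <;> omega

lemma mot_sum {w : List ℤ} (hw : IsMotzkinWord w) :
    w.sum = (w.count 1 : ℤ) - (w.count (-1) : ℤ) := by
  induction w with
  | nil => simp
  | cons x v ih =>
    have hx := word_head hw
    have ihv := ih (word_tail hw)
    rcases hx with h | h | h <;> subst h <;>
      simp [List.count_cons, ihv] <;> ring

lemma finite_len (n : ℕ) : {w : List ℤ | IsMotzkinWord w ∧ w.length = n}.Finite := by
  induction n with
  | zero =>
    apply Set.Finite.subset (Set.finite_singleton ([] : List ℤ))
    rintro w ⟨-, hw⟩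
    simp [List.length_eq_zero_iff.mp hw]
  | succ n ih =>
    apply Set.Finite.subset
      (Set.Finite.image2 (f := fun (x : ℤ) (v : List ℤ) => x :: v)
        (Set.toFinite ({-1, 0, 1} : Set ℤ)) ih)
    rintro w ⟨hw, hlen⟩
    match w with
    | x :: v =>
      exact Set.mem_image2_of_mem (by rcases word_head hw with h|h|h <;> simp [h])
        ⟨word_tail hw, by simpa using hlen⟩

lemma bridge_finite (l m : ℕ) : (MotzkinBridge l m).Finite := by
  apply Set.Finite.subset (finite_len (l + 2 * m))
  rintro w ⟨hw, h0, hm, hp⟩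
  exact ⟨hw, by rw [mot_length hw, h0, hm, hp]; omega⟩

lemma exc_finite (l m : ℕ) : (MotzkinExcursion l m).Finite :=
  (bridge_finite l m).subset fun _ h => h.1

lemma exc_eq_ncard (l m : ℕ) : Exc l m = (MotzkinExcursion l m).ncard :=
  Nat.card_coe_set_eq _

lemma exc_sum_eq_zero {l m : ℕ} {w : List ℤ} (h : w ∈ MotzkinExcursion l m) : w.sum = 0 := by
  obtain ⟨⟨hw, h0, hm, hp⟩, -⟩ := h
  rw [mot_sum hw, hm, hp]; ring

lemma exc_zero_zero : Exc 0 0 = 1 := by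
  rw [exc_eq_ncard]
  convert Set.ncard_singleton ([] : List ℤ)
  ext w
  constructor
  · rintro ⟨⟨hw, h0, hm, hp⟩, -⟩
    have := mot_length hw
    rw [h0, hm, hp] at this
    simpa using List.length_eq_zero_iff.mp (by omega)
  · rintro rfl
    refine ⟨⟨fun x hx => absurd hx List.not_mem_nil, rfl, rfl, rfl⟩, ?_⟩
    intro p hp
    simp [List.prefix_nil.mp hp]

lemma prefix_append_cases {α : Type*} {p l1 l2 : List α} (h : p <+: l1 ++ l2) :
    p <+: l1 ∨ ∃ q, p = l1 ++ q ∧ q <+: l2 := by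
  by_cases hl : p.length ≤ l1.length
  · exact Or.inl (List.prefix_of_prefix_length_le h (l1.prefix_append l2) hl)
  · right
    have h1 : l1 <+: p :=
      List.prefix_of_prefix_length_le (l1.prefix_append l2) h (le_of_not_ge hl)
    obtain ⟨q, rfl⟩ := h1
    obtain ⟨r, hr⟩ := h
    refine ⟨q, rfl, r, ?_⟩
    rwa [List.append_assoc, List.append_right_inj] at hr

lemma first_passage : ∀ (n : ℕ) (v : List ℤ), v.length ≤ n →
    IsMotzkinWord v → v.sum ≤ -1 →
    ∃ p q, v = p ++ (-1) :: q ∧ p.sum = 0 ∧ ∀ r, r <+: p → 0 ≤ r.sum := by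
  intro n
  induction n with
  | zero =>
    intro v hlen _ hsum
    rw [List.length_eq_zero_iff.mp (Nat.le_zero.mp hlen)] at hsum
    simp at hsum
  | succ n ih =>
    intro v hlen hw hsum
    match v with
    | [] => simp at hsum
    | x :: v' =>
      have hw' : IsMotzkinWord v' := word_tail hw
      have hlen' : v'.length ≤ n := by simpa using hlen
      have hsx : (x :: v').sum = x + v'.sum := by simp
      rcases word_head hw with h | h | h
      · subst h
        exact ⟨[], v', rfl, rfl, by rintro r hr; simp [List.prefix_nil.mp hr]⟩
      · subst h
        have : v'.sum ≤ -1 := by rw [hsx] at hsum; omega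
        obtain ⟨p, q, hv, hps, hpre⟩ := ih v' hlen' hw' this
        refine ⟨0 :: p, q, by rw [hv]; rfl, by simp [hps], ?_⟩
        intro r hr
        rcases List.prefix_cons_iff.mp hr with rfl | ⟨s, rfl, hs⟩
        · simp
        · simpa using hpre s hs
      · subst h
        have hv' : v'.sum ≤ -2 := by rw [hsx] at hsum; omega
        obtain ⟨p1, q1, hv1, hp1s, hp1⟩ := ih v' hlen' hw' (by omega)
        have hq1w : IsMotzkinWord q1 := by
          intro y hy
          exact hw' y (by rw [hv1]; exact List.mem_append_right _ (List.mem_cons_of_mem _ hy))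
        have hq1len : q1.length ≤ n := by
          have := hlen'
          rw [hv1] at this
          simp at this; omega
        have hq1sum : q1.sum ≤ -1 := by
          have : v'.sum = p1.sum + (-1) + q1.sum := by rw [hv1]; simp; ring
          omega
        obtain ⟨p2, q2, hv2, hp2s, hp2⟩ := ih q1 hq1len hq1w hq1sum
        refine ⟨1 :: (p1 ++ (-1) :: p2), q2, ?_, ?_, ?_⟩
        · rw [hv1, hv2]; simp
        · simp [hp1s, hp2s]
        · intro r hr
          rcases List.prefix_cons_iff.mp hr with rfl | ⟨s, rfl, hs⟩
          · simp
          · rcases prefix_append_cases hs with hs1 | ⟨q, rfl, hq⟩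
            · have := hp1 s hs1; simp; omega
            · rcases List.prefix_cons_iff.mp hq with rfl | ⟨s2, rfl, hs2⟩
              · simp [hp1s]
              · have := hp2 s2 hs2
                simp [hp1s]
                omega

/-! ### The glue map -/

def glue (pq : List ℤ × List ℤ) : List ℤ := 1 :: (pq.1 ++ (-1) :: pq.2)

lemma glue_mem {l1 m1 l2 m2 : ℕ} {e1 e2 : List ℤ}
    (h1 : e1 ∈ MotzkinExcursion l1 m1) (h2 : e2 ∈ MotzkinExcursion l2 m2) :
    glue (e1, e2) ∈ MotzkinExcursion (l1 + l2) (m1 + m2 + 1) := by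
  obtain ⟨⟨hw1, c10, c1m, c1p⟩, hpre1⟩ := h1
  obtain ⟨⟨hw2, c20, c2m, c2p⟩, hpre2⟩ := h2
  have hs1 : e1.sum = 0 := by rw [mot_sum hw1, c1m, c1p]; ring
  refine ⟨⟨?_, ?_, ?_, ?_⟩, ?_⟩
  · intro x hx
    simp only [glue, List.mem_cons, List.mem_append] at hx
    rcases hx with rfl | h | rfl | h
    · right; right; rfl
    · exact hw1 x h
    · left; rfl
    · exact hw2 x h
  · simp [glue, List.count_cons, List.count_append, c10, c20]
  · simp [glue, List.count_cons, List.count_append, c1m, c2m] <;> omega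
  · simp [glue, List.count_cons, List.count_append, c1p, c2p] <;> omega
  · intro p hp
    rcases List.prefix_cons_iff.mp hp with rfl | ⟨s, rfl, hs⟩
    · simp
    · rcases prefix_append_cases hs with hs1 | ⟨q, rfl, hq⟩
      · have := hpre1 s hs1; simp; omega
      · rcases List.prefix_cons_iff.mp hq with rfl | ⟨s2, rfl, hs2⟩
        · simp [hs1]
        · have := hpre2 s2 hs2
          simp [hs1]
          omega

lemma glue_inj_aux {a a' b b' : List ℤ} (ha : a.sum = 0)
    (ha' : ∀ r, r <+: a' → 0 ≤ r.sum) (hlen : a.length ≤ a'.length)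
    (heq : a ++ (-1) :: b = a' ++ (-1) :: b') : a = a' ∧ b = b' := by
  have hpa : a <+: a' := by
    apply List.prefix_of_prefix_length_le (l₃ := a ++ (-1) :: b)
    · exact a.prefix_append _
    · rw [heq]; exact a'.prefix_append _
    · exact hlen
  obtain ⟨d, rfl⟩ := hpa
  rw [List.append_assoc, List.append_right_inj] at heq
  cases d with
  | nil => simp_all
  | cons x d' =>
    simp only [List.cons_append, List.cons_eq_cons] at heq
    obtain ⟨rfl, rfl⟩ := heq
    exfalso
    have h1 : (a ++ [-1]).sum < 0 := by simp [ha]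
    have h2 : 0 ≤ (a ++ [-1]).sum := ha' _ ⟨d', by simp⟩
    omega

lemma glue_inj {a a' b b' : List ℤ} (ha : a.sum = 0) (ha'' : a'.sum = 0)
    (hp : ∀ r, r <+: a → 0 ≤ r.sum)
    (hp' : ∀ r, r <+: a' → 0 ≤ r.sum)
    (heq : glue (a, b) = glue (a', b')) : a = a' ∧ b = b' := by
  simp only [glue, List.cons_eq_cons, true_and] at heq
  rcases le_total a.length a'.length with hl | hl
  · exact glue_inj_aux ha hp' hl heq
  · obtain ⟨h1, h2⟩ := glue_inj_aux ha'' hp hl heq.symm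
    exact ⟨h1.symm, h2.symm⟩

lemma glue_cover {l m : ℕ} {w : List ℤ} (hw : w ∈ MotzkinExcursion l (m + 1))
    (hhead : ∃ v, w = (1 : ℤ) :: v) :
    ∃ l1 l2 m1 m2 e1 e2, l1 + l2 = l ∧ m1 + m2 = m ∧
      e1 ∈ MotzkinExcursion l1 m1 ∧ e2 ∈ MotzkinExcursion l2 m2 ∧ w = glue (e1, e2) := by
  obtain ⟨v, rfl⟩ := hhead
  obtain ⟨⟨hmw, c0, cm, cp⟩, hpre⟩ := hw
  have hwv : IsMotzkinWord v := word_tail hmw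
  have hsw : ((1 : ℤ) :: v).sum = 0 := by
    rw [mot_sum hmw, cm, cp]; ring
  have hsv : v.sum ≤ -1 := by
    have : ((1:ℤ) :: v).sum = 1 + v.sum := by simp
    omega
  obtain ⟨p, q, rfl, hps, hppre⟩ := first_passage v.length v le_rfl hwv hsv
  have hwp : IsMotzkinWord p := fun y hy => hwv y (List.mem_append_left _ hy)
  have hwq : IsMotzkinWord q :=
    fun y hy => hwv y (List.mem_append_right _ (List.mem_cons_of_mem _ hy))
  have hqs : q.sum = 0 := by
    have : ((1:ℤ) :: (p ++ (-1) :: q)).sum = 1 + p.sum + (-1) + q.sum := by simp; ring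
    omega
  have hpc : (p.count 1 : ℤ) - p.count (-1) = 0 := by rw [← mot_sum hwp]; exact hps
  have hqc : (q.count 1 : ℤ) - q.count (-1) = 0 := by rw [← mot_sum hwq]; exact hqs
  refine ⟨p.count 0, q.count 0, p.count (-1), q.count (-1), p, q, ?_, ?_, ?_, ?_, rfl⟩
  · have : ((1:ℤ) :: (p ++ (-1) :: q)).count 0 = p.count 0 + q.count 0 := by
      simp [List.count_cons, List.count_append]
    omega
  · have : ((1:ℤ) :: (p ++ (-1) :: q)).count (-1) = p.count (-1) + q.count (-1) + 1 := by
      simp [List.count_cons, List.count_append]; ring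
    omega
  · exact ⟨⟨hwp, rfl, rfl, by omega⟩, hppre⟩
  · refine ⟨⟨hwq, rfl, rfl, by omega⟩, ?_⟩
    intro r hr
    obtain ⟨s, rfl⟩ := hr
    have h0 : ((1:ℤ) :: (p ++ (-1) :: r)) <+: ((1:ℤ) :: (p ++ (-1) :: (r ++ s))) :=
      ⟨s, by simp⟩
    have := hpre _ h0
    have hexpand : ((1:ℤ) :: (p ++ (-1) :: r)).sum = 1 + p.sum + (-1) + r.sum := by
      simp; ring
    omega

lemma ncard_prod {α β : Type*} (s : Set α) (t : Set β) :
    (s ×ˢ t).ncard = s.ncard * t.ncard := by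
  rw [← Nat.card_coe_set_eq, ← Nat.card_coe_set_eq, ← Nat.card_coe_set_eq,
    ← Nat.card_prod]
  exact Nat.card_congr (Equiv.Set.prod s t)

lemma ncard_biUnion {ι α : Type*} [DecidableEq ι] (s : Finset ι) (f : ι → Set α)
    (hfin : ∀ i ∈ s, (f i).Finite)
    (hdisj : ∀ i ∈ s, ∀ j ∈ s, i ≠ j → Disjoint (f i) (f j)) :
    (⋃ i ∈ s, f i).ncard = ∑ i ∈ s, (f i).ncard := by
  induction s using Finset.induction_on with
  | empty => simp
  | @insert a s ha ih =>
    have hda : Disjoint (f a) (⋃ i ∈ s, f i) := by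
      simp only [Set.disjoint_iUnion_right]
      intro i hi
      exact hdisj a (Finset.mem_insert_self a s) i (Finset.mem_insert_of_mem hi)
        (fun h => ha (h ▸ hi))
    have hfa : (f a).Finite := hfin a (Finset.mem_insert_self a s)
    have hfu : (⋃ i ∈ (s : Finset ι), f i).Finite :=
      Set.Finite.biUnion s.finite_toSet
        (fun i hi => hfin i (Finset.mem_insert_of_mem hi))
    rw [Finset.set_biUnion_insert, Set.ncard_union_eq hda hfa hfu, Finset.sum_insert ha,
      ih (fun i hi => hfin i (Finset.mem_insert_of_mem hi))
        (fun i hi j hj hij => hdisj i (Finset.mem_insert_of_mem hi) j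
          (Finset.mem_insert_of_mem hj) hij)]

lemma cons_count_aux (x : ℤ) (v : List ℤ) (c : ℤ) :
    (x :: v).count c = v.count c + if x = c then 1 else 0 := by
  simp [List.count_cons]

lemma head0_ncard (l m : ℕ) :
    {w ∈ MotzkinExcursion (l + 1) m | ∃ v, w = (0:ℤ) :: v}.ncard = Exc l m := by
  have himg : {w ∈ MotzkinExcursion (l + 1) m | ∃ v, w = (0:ℤ) :: v}
      = (fun v => (0:ℤ) :: v) '' MotzkinExcursion l m := by
    ext w
    constructor
    · rintro ⟨⟨⟨hw, c0, cm, cp⟩, hpre⟩, v, rfl⟩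
      rw [cons_count_aux] at c0 cm cp
      norm_num at c0 cm cp
      refine ⟨v, ⟨⟨word_tail hw, by omega, by omega, by omega⟩, ?_⟩, rfl⟩
      intro p hp
      obtain ⟨s, rfl⟩ := hp
      have := hpre ((0:ℤ) :: p) ⟨s, by simp⟩
      simpa using this
    · rintro ⟨v, ⟨⟨hw, c0, cm, cp⟩, hpre⟩, rfl⟩
      refine ⟨⟨⟨?_, ?_, ?_, ?_⟩, ?_⟩, v, rfl⟩
      · intro x hx
        rcases List.mem_cons.mp hx with rfl | hx
        · right; left; rfl
        · exact hw x hx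
      · rw [cons_count_aux, c0]; norm_num
      · rw [cons_count_aux, cm]; norm_num
      · rw [cons_count_aux, cp]; norm_num
      · intro p hp
        rcases List.prefix_cons_iff.mp hp with rfl | ⟨s, rfl, hs⟩
        · simp
        · simpa using hpre s hs
  rw [himg, Set.ncard_image_of_injOn (fun a _ b _ h => by injection h), exc_eq_ncard]

lemma head0_empty (m : ℕ) :
    {w ∈ MotzkinExcursion 0 m | ∃ v, w = (0:ℤ) :: v} = ∅ := by
  ext w
  simp only [Set.mem_setOf_eq, Set.mem_empty_iff_false, iff_false, not_and]
  rintro ⟨⟨hw, c0, cm, cp⟩, hpre⟩ ⟨v, rfl⟩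
  rw [cons_count_aux] at c0
  simp at c0

lemma head1_empty (l : ℕ) :
    {w ∈ MotzkinExcursion l 0 | ∃ v, w = (1:ℤ) :: v} = ∅ := by
  ext w
  simp only [Set.mem_setOf_eq, Set.mem_empty_iff_false, iff_false, not_and]
  rintro ⟨⟨hw, c0, cm, cp⟩, hpre⟩ ⟨v, rfl⟩
  rw [cons_count_aux] at cp
  simp at cp

lemma head1_ncard (l m : ℕ) :
    {w ∈ MotzkinExcursion l (m + 1) | ∃ v, w = (1:ℤ) :: v}.ncard
      = ∑ a ∈ Finset.HasAntidiagonal.antidiagonal l, ∑ b ∈ Finset.HasAntidiagonal.antidiagonal m,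
          Exc a.1 b.1 * Exc a.2 b.2 := by
  classical
  set F : (ℕ × ℕ) × (ℕ × ℕ) → Set (List ℤ) :=
    fun x => glue '' (MotzkinExcursion x.1.1 x.2.1 ×ˢ MotzkinExcursion x.1.2 x.2.2) with hF
  have hset : {w ∈ MotzkinExcursion l (m + 1) | ∃ v, w = (1:ℤ) :: v}
      = ⋃ x ∈ (Finset.HasAntidiagonal.antidiagonal l ×ˢ Finset.HasAntidiagonal.antidiagonal m :
          Finset ((ℕ × ℕ) × (ℕ × ℕ))), F x := by
    ext w
    simp only [Set.mem_setOf_eq, Set.mem_iUnion, Finset.mem_coe, Finset.mem_product,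
      Finset.HasAntidiagonal.mem_antidiagonal, exists_prop]
    constructor
    · rintro ⟨hw, hh⟩
      obtain ⟨l1, l2, m1, m2, e1, e2, hl, hm, he1, he2, rfl⟩ := glue_cover hw hh
      exact ⟨((l1, l2), (m1, m2)), ⟨hl, hm⟩, Set.mem_image_of_mem _ ⟨he1, he2⟩⟩
    · rintro ⟨x, ⟨hxl, hxm⟩, hw⟩
      obtain ⟨⟨e1, e2⟩, ⟨he1, he2⟩, rfl⟩ := hw
      have := glue_mem he1 he2
      rw [hxl, hxm] at this
      exact ⟨this, _, rfl⟩
  have hprops : ∀ (a b : ℕ) (e : List ℤ), e ∈ MotzkinExcursion a b →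
      e.sum = 0 ∧ (∀ r, r <+: e → 0 ≤ r.sum) ∧ e.count 0 = a ∧ e.count (-1) = b :=
    fun a b e he => ⟨exc_sum_eq_zero he, he.2, he.1.2.1, he.1.2.2.1⟩
  have hdisj : ∀ x ∈ (Finset.HasAntidiagonal.antidiagonal l ×ˢ Finset.HasAntidiagonal.antidiagonal m :
      Finset ((ℕ × ℕ) × (ℕ × ℕ))), ∀ y ∈ (Finset.HasAntidiagonal.antidiagonal l ×ˢ Finset.HasAntidiagonal.antidiagonal m :
      Finset ((ℕ × ℕ) × (ℕ × ℕ))), x ≠ y → Disjoint (F x) (F y) := by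
    rintro ⟨⟨x11, x12⟩, x21, x22⟩ _ ⟨⟨y11, y12⟩, y21, y22⟩ _ hxy
    rw [Set.disjoint_left]
    rintro w ⟨⟨e1, e2⟩, ⟨he1, he2⟩, rfl⟩ ⟨⟨f1, f2⟩, ⟨hf1, hf2⟩, heq⟩
    obtain ⟨hs1, hp1, hc01, hcm1⟩ := hprops _ _ _ he1
    obtain ⟨hs1', hp1', hc01', hcm1'⟩ := hprops _ _ _ hf1
    obtain ⟨h5, h6⟩ := glue_inj hs1' hs1 hp1' hp1 heq
    apply hxy
    obtain ⟨-, -, hc02, hcm2⟩ := hprops _ _ _ he2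
    obtain ⟨-, -, hc02', hcm2'⟩ := hprops _ _ _ hf2
    subst h5 h6
    simp only [Prod.mk.injEq]
    dsimp only at hc01 hcm1 hc02 hcm2 hc01' hcm1' hc02' hcm2'
    omega
  have hfin : ∀ x ∈ (Finset.HasAntidiagonal.antidiagonal l ×ˢ Finset.HasAntidiagonal.antidiagonal m :
      Finset ((ℕ × ℕ) × (ℕ × ℕ))), (F x).Finite := by
    intro x _
    exact Set.Finite.image _ ((exc_finite _ _).prod (exc_finite _ _))
  rw [hset, ncard_biUnion _ _ hfin hdisj, Finset.sum_product]
  apply Finset.sum_congr rfl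
  intro a _
  apply Finset.sum_congr rfl
  intro b _
  have hinj : Set.InjOn glue (MotzkinExcursion a.1 b.1 ×ˢ MotzkinExcursion a.2 b.2) := by
    rintro ⟨e1, e2⟩ ⟨he1, he2⟩ ⟨f1, f2⟩ ⟨hf1, hf2⟩ heq
    obtain ⟨hs1, hp1, -, -⟩ := hprops _ _ _ he1
    obtain ⟨hs1', hp1', -, -⟩ := hprops _ _ _ hf1
    obtain ⟨rfl, rfl⟩ := glue_inj hs1 hs1' hp1 hp1' heq
    rfl
  rw [hF]
  rw [Set.ncard_image_of_injOn hinj, ncard_prod, exc_eq_ncard, exc_eq_ncard]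

theorem exc_rec (l m : ℕ) :
    Exc l m = (if l = 0 ∧ m = 0 then 1 else 0)
      + (if 1 ≤ l then Exc (l - 1) m else 0)
      + (if 1 ≤ m then ∑ a ∈ Finset.HasAntidiagonal.antidiagonal l, ∑ b ∈ Finset.HasAntidiagonal.antidiagonal (m - 1),
          Exc a.1 b.1 * Exc a.2 b.2 else 0) := by
  by_cases h00 : l = 0 ∧ m = 0
  · obtain ⟨rfl, rfl⟩ := h00
    simp [exc_zero_zero]
  · have hA : {w ∈ MotzkinExcursion l m | ∃ v, w = (0:ℤ) :: v}.Finite :=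
      (exc_finite l m).subset (fun w hw => hw.1)
    have hB : {w ∈ MotzkinExcursion l m | ∃ v, w = (1:ℤ) :: v}.Finite :=
      (exc_finite l m).subset (fun w hw => hw.1)
    have hpart : MotzkinExcursion l m =
        {w ∈ MotzkinExcursion l m | ∃ v, w = (0:ℤ) :: v}
          ∪ {w ∈ MotzkinExcursion l m | ∃ v, w = (1:ℤ) :: v} := by
      ext w
      constructor
      · intro hw
        match w with
        | [] =>
          exfalso
          obtain ⟨⟨-, c0, cm, -⟩, -⟩ := hw
          simp only [List.count_nil] at c0 cm
          exact h00 ⟨c0.symm, cm.symm⟩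
        | x :: v =>
          have h0 : (0:ℤ) ≤ ([x]).sum := hw.2 [x] ⟨v, rfl⟩
          simp only [List.sum_cons, List.sum_nil, add_zero] at h0
          rcases word_head hw.1.1 with h | h | h
          · omega
          · exact Or.inl ⟨hw, v, by rw [h]⟩
          · exact Or.inr ⟨hw, v, by rw [h]⟩
      · rintro (⟨hw, -⟩ | ⟨hw, -⟩) <;> exact hw
    have hdisj : Disjoint {w ∈ MotzkinExcursion l m | ∃ v, w = (0:ℤ) :: v}
        {w ∈ MotzkinExcursion l m | ∃ v, w = (1:ℤ) :: v} := by
      rw [Set.disjoint_left]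
      rintro w ⟨-, v, rfl⟩ ⟨-, v', hv'⟩
      simp only [List.cons_eq_cons] at hv'
      exact absurd hv'.1 (by norm_num)
    have hsum : Exc l m = {w ∈ MotzkinExcursion l m | ∃ v, w = (0:ℤ) :: v}.ncard
        + {w ∈ MotzkinExcursion l m | ∃ v, w = (1:ℤ) :: v}.ncard := by
      rw [exc_eq_ncard]
      conv_lhs => rw [hpart]
      exact Set.ncard_union_eq hdisj hA hB
    rw [if_neg h00, hsum]
    match l, m with
    | 0, 0 => exact absurd ⟨rfl, rfl⟩ h00
    | 0, m' + 1 =>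
      rw [head0_empty, head1_ncard]
      simp
    | l' + 1, 0 =>
      rw [head1_empty, head0_ncard]
      simp
    | l' + 1, m' + 1 =>
      rw [head0_ncard, head1_ncard]
      simp

/-! ### Analytic part -/

noncomputable def wgt (t u : ℝ) (p : ℕ × ℕ) : ℝ := (Exc p.1 p.2 : ℝ) * t ^ p.1 * u ^ p.2

def TN (N : ℕ) : Finset (ℕ × ℕ) :=
  (Finset.range (N + 1) ×ˢ Finset.range (N + 1)).filter (fun p => p.1 + 2 * p.2 ≤ N)

lemma mem_TN {N : ℕ} {p : ℕ × ℕ} : p ∈ TN N ↔ p.1 + 2 * p.2 ≤ N := by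
  simp only [TN, Finset.mem_filter, Finset.mem_product, Finset.mem_range]
  omega

lemma TN_mono : Monotone TN := by
  intro a b hab p hp
  rw [mem_TN] at *
  omega

lemma wgt_nonneg {t u : ℝ} (ht : 0 ≤ t) (hu : 0 ≤ u) (p : ℕ × ℕ) : 0 ≤ wgt t u p := by
  unfold wgt
  positivity

lemma exc_rec_real (t u : ℝ) (l m : ℕ) :
    (Exc l m : ℝ) * t ^ l * u ^ m =
      (if l = 0 ∧ m = 0 then (1:ℝ) else 0) * t ^ l * u ^ m
      + (if 1 ≤ l then ((Exc (l - 1) m : ℕ) : ℝ) else 0) * t ^ l * u ^ m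
      + (if 1 ≤ m then ∑ a ∈ Finset.HasAntidiagonal.antidiagonal l, ∑ b ∈ Finset.HasAntidiagonal.antidiagonal (m - 1),
          ((Exc a.1 b.1 : ℝ) * (Exc a.2 b.2 : ℝ)) else 0) * t ^ l * u ^ m := by
  rw [← add_mul, ← add_mul, ← add_mul, ← add_mul]
  congr 2
  rw [show (Exc l m : ℝ) = ((Exc l m : ℕ) : ℝ) from rfl, exc_rec l m]
  push_cast
  ring

lemma sum_delta (t u : ℝ) (N : ℕ) :
    ∑ p ∈ TN (N + 1), (if p.1 = 0 ∧ p.2 = 0 then (1:ℝ) else 0) * t ^ p.1 * u ^ p.2 = 1 := by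
  rw [Finset.sum_eq_single_of_mem ((0:ℕ), (0:ℕ)) (mem_TN.mpr (by omega))]
  · simp
  · rintro ⟨a, b⟩ - hne
    have : ¬(a = 0 ∧ b = 0) := by
      rintro ⟨rfl, rfl⟩; exact hne rfl
    simp [this]

lemma sum_step (t u : ℝ) (N : ℕ) :
    ∑ p ∈ TN (N + 1), (if 1 ≤ p.1 then ((Exc (p.1 - 1) p.2 : ℕ) : ℝ) else 0) * t ^ p.1 * u ^ p.2
      = t * ∑ p ∈ TN N, wgt t u p := by
  have h1 : ∑ p ∈ TN (N + 1), (if 1 ≤ p.1 then ((Exc (p.1 - 1) p.2 : ℕ) : ℝ) else 0)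
        * t ^ p.1 * u ^ p.2
      = ∑ p ∈ (TN (N + 1)).filter (fun p => 1 ≤ p.1),
          ((Exc (p.1 - 1) p.2 : ℕ) : ℝ) * t ^ p.1 * u ^ p.2 := by
    rw [Finset.sum_filter]
    apply Finset.sum_congr rfl
    intro p _
    rw [ite_mul, ite_mul, zero_mul, zero_mul]
  rw [h1, Finset.mul_sum]
  apply Finset.sum_nbij' (i := fun p => (p.1 - 1, p.2)) (j := fun q => (q.1 + 1, q.2))
  · intro p hp
    simp only [Finset.mem_filter, mem_TN] at hp
    rw [mem_TN]
    omega
  · intro q hq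
    rw [mem_TN] at hq
    simp only [Finset.mem_filter, mem_TN]
    omega
  · rintro ⟨p1, p2⟩ hp
    simp only [Finset.mem_filter] at hp
    have h2 : p1 - 1 + 1 = p1 := by omega
    simp [h2]
  · rintro ⟨q1, q2⟩ _
    simp
  · intro p hp
    simp only [Finset.mem_filter] at hp
    obtain ⟨p1, p2⟩ := p
    have h2 : 1 ≤ p1 := hp.2
    unfold wgt
    simp only
    obtain ⟨k, rfl⟩ : ∃ k, p1 = k + 1 := ⟨p1 - 1, by omega⟩
    simp only [Nat.add_sub_cancel]
    rw [pow_succ]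
    ring

/-- the conv sum as a sum over a sigma finset, then over an image -/
def convSig (M : ℕ) : Finset ((_ : ℕ × ℕ) × ((ℕ × ℕ) × (ℕ × ℕ))) :=
  ((TN M).filter (fun p => 1 ≤ p.2)).sigma
    (fun p => Finset.HasAntidiagonal.antidiagonal p.1 ×ˢ Finset.HasAntidiagonal.antidiagonal (p.2 - 1))

def convMap (x : (_ : ℕ × ℕ) × ((ℕ × ℕ) × (ℕ × ℕ))) : (ℕ × ℕ) × (ℕ × ℕ) :=
  ((x.2.1.1, x.2.2.1), (x.2.1.2, x.2.2.2))

lemma mem_convSig {M : ℕ} {x : (_ : ℕ × ℕ) × ((ℕ × ℕ) × (ℕ × ℕ))} :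
    x ∈ convSig M ↔ (x.1.1 + 2 * x.1.2 ≤ M ∧ 1 ≤ x.1.2) ∧
      x.2.1.1 + x.2.1.2 = x.1.1 ∧ x.2.2.1 + x.2.2.2 = x.1.2 - 1 := by
  simp only [convSig, Finset.mem_sigma, Finset.mem_filter, mem_TN, Finset.mem_product,
    Finset.HasAntidiagonal.mem_antidiagonal]

lemma convMap_injOn (M : ℕ) : ∀ x ∈ convSig M, ∀ y ∈ convSig M,
    convMap x = convMap y → x = y := by
  rintro ⟨⟨p1, p2⟩, ⟨a1, a2⟩, b1, b2⟩ hx ⟨⟨q1, q2⟩, ⟨c1, c2⟩, d1, d2⟩ hy hmap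
  rw [mem_convSig] at hx hy
  simp only [convMap, Prod.mk.injEq] at hmap hx hy
  obtain ⟨⟨rfl, rfl⟩, rfl, rfl⟩ := hmap
  have h1 : p1 = q1 := by omega
  have h2 : p2 = q2 := by omega
  subst h1; subst h2
  rfl

lemma conv_sum_eq (t u : ℝ) (M : ℕ) :
    ∑ p ∈ TN M, (if 1 ≤ p.2 then ∑ a ∈ Finset.HasAntidiagonal.antidiagonal p.1,
        ∑ b ∈ Finset.HasAntidiagonal.antidiagonal (p.2 - 1), ((Exc a.1 b.1 : ℝ) * (Exc a.2 b.2 : ℝ)) else 0)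
        * t ^ p.1 * u ^ p.2
      = ∑ y ∈ (convSig M).image convMap, u * wgt t u y.1 * wgt t u y.2 := by
  have h1 : ∀ p : ℕ × ℕ, (if 1 ≤ p.2 then ∑ a ∈ Finset.HasAntidiagonal.antidiagonal p.1,
        ∑ b ∈ Finset.HasAntidiagonal.antidiagonal (p.2 - 1), ((Exc a.1 b.1 : ℝ) * (Exc a.2 b.2 : ℝ)) else 0)
        * t ^ p.1 * u ^ p.2
      = if 1 ≤ p.2 then (∑ a ∈ Finset.HasAntidiagonal.antidiagonal p.1, ∑ b ∈ Finset.HasAntidiagonal.antidiagonal (p.2 - 1),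
          ((Exc a.1 b.1 : ℝ) * (Exc a.2 b.2 : ℝ))) * t ^ p.1 * u ^ p.2 else 0 := by
    intro p
    rw [ite_mul, ite_mul, zero_mul, zero_mul]
  rw [Finset.sum_congr rfl (fun p _ => h1 p), ← Finset.sum_filter,
    Finset.sum_image (convMap_injOn M), convSig, Finset.sum_sigma]
  apply Finset.sum_congr rfl
  rintro ⟨p1, p2⟩ hp
  simp only [Finset.mem_filter, mem_TN] at hp
  obtain ⟨-, hp2⟩ := hp
  simp only [Finset.sum_mul]
  rw [Finset.sum_product]
  apply Finset.sum_congr rfl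
  rintro ⟨a1, a2⟩ ha
  apply Finset.sum_congr rfl
  rintro ⟨b1, b2⟩ hb
  rw [Finset.HasAntidiagonal.mem_antidiagonal] at ha hb
  simp only [convMap, wgt]
  obtain ⟨k, rfl⟩ : ∃ k, p2 = k + 1 := ⟨p2 - 1, by omega⟩
  simp only [Nat.add_sub_cancel] at hb ⊢
  subst ha
  subst hb
  rw [pow_add, pow_add, pow_succ]
  ring

lemma prod_sum_eq (t u : ℝ) (N : ℕ) :
    ∑ y ∈ TN N ×ˢ TN N, u * wgt t u y.1 * wgt t u y.2
      = u * (∑ p ∈ TN N, wgt t u p) * (∑ p ∈ TN N, wgt t u p) := by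
  rw [Finset.sum_product, mul_assoc, Finset.sum_mul_sum, Finset.mul_sum]
  refine Finset.sum_congr rfl fun p _ => ?_
  rw [Finset.mul_sum]
  exact Finset.sum_congr rfl fun q _ => by ring

lemma image_subset_prod (t u : ℝ) (N : ℕ) :
    (convSig (N + 1)).image convMap ⊆ TN N ×ˢ TN N := by
  intro y hy
  rw [Finset.mem_image] at hy
  obtain ⟨x, hx, rfl⟩ := hy
  rw [mem_convSig] at hx
  simp only [convMap, Finset.mem_product, mem_TN]
  omega

lemma prod_subset_image (t u : ℝ) (N : ℕ) :
    TN N ×ˢ TN N ⊆ (convSig (2 * N + 2)).image convMap := by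
  rintro ⟨⟨q1, q2⟩, q1', q2'⟩ hy
  simp only [Finset.mem_product, mem_TN] at hy
  rw [Finset.mem_image]
  refine ⟨⟨(q1 + q1', q2 + q2' + 1), ((q1, q1'), (q2, q2'))⟩, ?_, rfl⟩
  rw [mem_convSig]
  dsimp only
  omega

lemma c_succ_eq (t u : ℝ) (N : ℕ) :
    ∑ p ∈ TN (N + 1), wgt t u p
      = 1 + t * (∑ p ∈ TN N, wgt t u p)
        + ∑ y ∈ (convSig (N + 1)).image convMap, u * wgt t u y.1 * wgt t u y.2 := by
  have : ∀ p ∈ TN (N + 1), wgt t u p =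
      (if p.1 = 0 ∧ p.2 = 0 then (1:ℝ) else 0) * t ^ p.1 * u ^ p.2
      + (if 1 ≤ p.1 then ((Exc (p.1 - 1) p.2 : ℕ) : ℝ) else 0) * t ^ p.1 * u ^ p.2
      + (if 1 ≤ p.2 then ∑ a ∈ Finset.HasAntidiagonal.antidiagonal p.1, ∑ b ∈ Finset.HasAntidiagonal.antidiagonal (p.2 - 1),
          ((Exc a.1 b.1 : ℝ) * (Exc a.2 b.2 : ℝ)) else 0) * t ^ p.1 * u ^ p.2 :=
    fun p _ => exc_rec_real t u p.1 p.2
  rw [Finset.sum_congr rfl this, Finset.sum_add_distrib, Finset.sum_add_distrib,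
    sum_delta, sum_step, conv_sum_eq]

lemma c_nonneg {t u : ℝ} (ht : 0 ≤ t) (hu : 0 ≤ u) (N : ℕ) :
    0 ≤ ∑ p ∈ TN N, wgt t u p :=
  Finset.sum_nonneg fun p _ => wgt_nonneg ht hu p

lemma c_mono {t u : ℝ} (ht : 0 ≤ t) (hu : 0 ≤ u) {M N : ℕ} (h : M ≤ N) :
    ∑ p ∈ TN M, wgt t u p ≤ ∑ p ∈ TN N, wgt t u p :=
  Finset.sum_le_sum_of_subset_of_nonneg (TN_mono h) fun p _ _ => wgt_nonneg ht hu p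

lemma step_upper (t u : ℝ) (ht : 0 ≤ t) (hu : 0 ≤ u) (N : ℕ) :
    ∑ p ∈ TN (N + 1), wgt t u p
      ≤ 1 + t * (∑ p ∈ TN N, wgt t u p)
        + u * (∑ p ∈ TN N, wgt t u p) * (∑ p ∈ TN N, wgt t u p) := by
  rw [c_succ_eq]
  have h3 : ∑ y ∈ (convSig (N + 1)).image convMap, u * wgt t u y.1 * wgt t u y.2
      ≤ ∑ y ∈ TN N ×ˢ TN N, u * wgt t u y.1 * wgt t u y.2 :=
    Finset.sum_le_sum_of_subset_of_nonneg (image_subset_prod t u N)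
      (fun y _ _ => mul_nonneg (mul_nonneg hu (wgt_nonneg ht hu _)) (wgt_nonneg ht hu _))
  rw [prod_sum_eq] at h3
  linarith

lemma step_lower (t u : ℝ) (ht : 0 ≤ t) (hu : 0 ≤ u) (N : ℕ) :
    1 + t * (∑ p ∈ TN N, wgt t u p)
        + u * (∑ p ∈ TN N, wgt t u p) * (∑ p ∈ TN N, wgt t u p)
      ≤ ∑ p ∈ TN (2 * N + 2), wgt t u p := by
  have h := c_succ_eq t u (2 * N + 1)
  have heq : 2 * N + 1 + 1 = 2 * N + 2 := rfl
  rw [heq] at h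
  rw [h]
  have h1 : t * (∑ p ∈ TN N, wgt t u p) ≤ t * (∑ p ∈ TN (2 * N + 1), wgt t u p) :=
    mul_le_mul_of_nonneg_left (c_mono ht hu (by omega)) ht
  have h3 : ∑ y ∈ TN N ×ˢ TN N, u * wgt t u y.1 * wgt t u y.2
      ≤ ∑ y ∈ (convSig (2 * N + 2)).image convMap, u * wgt t u y.1 * wgt t u y.2 :=
    Finset.sum_le_sum_of_subset_of_nonneg (prod_subset_image t u N)
      (fun y _ _ => mul_nonneg (mul_nonneg hu (wgt_nonneg ht hu _)) (wgt_nonneg ht hu _))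
  rw [prod_sum_eq] at h3
  linarith

lemma c_zero (t u : ℝ) : ∑ p ∈ TN 0, wgt t u p = 1 := by
  have hT : TN 0 = {((0:ℕ), (0:ℕ))} := by
    ext p
    rw [mem_TN, Finset.mem_singleton, Prod.ext_iff]
    omega
  rw [hT, Finset.sum_singleton]
  simp [wgt, exc_zero_zero]

end MotzkinAux

/-- For `t ≥ 0`, `u > 0` with `t + 2√u < 1`, the generating function of Motzkin
excursions converges with value `(1 − t − √((1−t)² − 4u)) / (2u)`. -/
theorem excursion_gf_value (t u : ℝ) (ht : 0 ≤ t) (hu : 0 < u)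
    (h : t + 2 * Real.sqrt u < 1) :
    Summable (fun p : ℕ × ℕ => (Exc p.1 p.2 : ℝ) * t ^ p.1 * u ^ p.2) ∧
      ∑' p : ℕ × ℕ, (Exc p.1 p.2 : ℝ) * t ^ p.1 * u ^ p.2 =
        (1 - t - Real.sqrt ((1 - t) ^ 2 - 4 * u)) / (2 * u) := by
  open MotzkinAux in
  have hsu : 0 ≤ Real.sqrt u := Real.sqrt_nonneg u
  have h1t : 2 * Real.sqrt u < 1 - t := by linarith
  have h1tpos : 0 < 1 - t := by linarith
  have hDpos : 0 < (1 - t) ^ 2 - 4 * u := by nlinarith [Real.sq_sqrt hu.le]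
  set s := Real.sqrt ((1 - t) ^ 2 - 4 * u) with hsdef
  have hs2 : s ^ 2 = (1 - t) ^ 2 - 4 * u := Real.sq_sqrt hDpos.le
  have hspos : 0 < s := Real.sqrt_pos.mpr hDpos
  have hslt : s < 1 - t := by nlinarith
  set r : ℝ := (1 - t - s) / (2 * u) with hrdef
  have hr0 : 0 ≤ r := by
    apply div_nonneg _ (by linarith)
    linarith
  have key : 2 * u * r = 1 - t - s := by
    rw [hrdef]; field_simp
  have hs' : s = 1 - t - 2 * u * r := by linarith
  have h5 : (1 - t - 2 * u * r) ^ 2 = (1 - t) ^ 2 - 4 * u := by rw [← hs']; exact hs2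
  have hq : 4 * u * (u * r ^ 2 - (1 - t) * r + 1) = 0 := by linear_combination h5
  have hq2 : u * r ^ 2 - (1 - t) * r + 1 = 0 := by
    rcases mul_eq_zero.mp hq with h' | h'
    · exact absurd h' (by positivity)
    · exact h'
  have hreq : r = 1 + t * r + u * r * r := by nlinarith [hq2]
  -- bound the partial sums
  have hcr : ∀ N, ∑ p ∈ TN N, wgt t u p ≤ r := by
    intro N
    induction N with
    | zero =>
      rw [c_zero]
      nlinarith [hr0, mul_nonneg (mul_nonneg hu.le hr0) hr0, mul_nonneg ht hr0]
    | succ n ih =>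
      have h1 := step_upper t u ht hu.le n
      have hc0 := c_nonneg (t := t) (u := u) ht hu.le n
      have h2 : t * (∑ p ∈ TN n, wgt t u p) ≤ t * r := mul_le_mul_of_nonneg_left ih ht
      have h3 : u * (∑ p ∈ TN n, wgt t u p) * (∑ p ∈ TN n, wgt t u p) ≤ u * r * r :=
        mul_le_mul (mul_le_mul_of_nonneg_left ih hu.le) ih hc0 (mul_nonneg hu.le hr0)
      linarith
  have hwnn : ∀ p : ℕ × ℕ, 0 ≤ wgt t u p := wgt_nonneg ht hu.le
  have hbound : ∀ f : Finset (ℕ × ℕ), ∑ p ∈ f, wgt t u p ≤ r := by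
    intro f
    have hsub : f ⊆ TN (f.sup fun p => p.1 + 2 * p.2) := by
      intro p hp
      exact mem_TN.mpr (Finset.le_sup (f := fun p => p.1 + 2 * p.2) hp)
    calc ∑ p ∈ f, wgt t u p ≤ ∑ p ∈ TN (f.sup fun p => p.1 + 2 * p.2), wgt t u p :=
          Finset.sum_le_sum_of_subset_of_nonneg hsub fun p _ _ => hwnn p
      _ ≤ r := hcr _
  have hsum : Summable (wgt t u) := summable_of_sum_le hwnn hbound
  refine ⟨hsum, ?_⟩
  set S : ℝ := ∑' p : ℕ × ℕ, wgt t u p with hSdef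
  have hS : HasSum (wgt t u) S := hsum.hasSum
  have htf : Filter.Tendsto TN Filter.atTop Filter.atTop :=
    Filter.tendsto_atTop_finset_of_monotone TN_mono
      (fun p => ⟨p.1 + 2 * p.2, mem_TN.mpr le_rfl⟩)
  have htend : Filter.Tendsto (fun N => ∑ p ∈ TN N, wgt t u p) Filter.atTop (nhds S) :=
    hS.comp htf
  have hSr : S ≤ r := le_of_tendsto' htend hcr
  have hrhs : Filter.Tendsto (fun N => 1 + t * (∑ p ∈ TN N, wgt t u p)
      + u * (∑ p ∈ TN N, wgt t u p) * (∑ p ∈ TN N, wgt t u p))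
      Filter.atTop (nhds (1 + t * S + u * S * S)) :=
    ((htend.const_mul t).const_add 1).add ((htend.const_mul u).mul htend)
  have hup : S ≤ 1 + t * S + u * S * S := by
    apply le_of_tendsto_of_tendsto' (htend.comp (Filter.tendsto_add_atTop_nat 1)) hrhs
    intro N
    exact step_upper t u ht hu.le N
  have hlow : 1 + t * S + u * S * S ≤ S := by
    have h2n : Filter.Tendsto (fun N : ℕ => 2 * N + 2) Filter.atTop Filter.atTop :=
      Filter.tendsto_atTop_atTop_of_monotone (fun a b hab => by omega) (fun b => ⟨b, by omega⟩)
    apply le_of_tendsto_of_tendsto' hrhs (htend.comp h2n)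
    intro N
    exact step_lower t u ht hu.le N
  have heqS : S = 1 + t * S + u * S * S := le_antisymm hup hlow
  have hfin : S = r := by
    rcases eq_or_lt_of_le hSr with h' | hlt
    · exact h'
    · exfalso
      have hfac : (r - S) * (1 - t - u * (r + S)) = 0 := by
        linear_combination hreq - heqS
      rcases mul_eq_zero.mp hfac with h' | h'
      · linarith
      · have h6 : u * S < u * r := mul_lt_mul_of_pos_left hlt hu
        linarith
  exact hfin
end

section
/- Let D be a finite nonempty set of even positive integers, let d̄ = gcd{i : 2i ∈ D}, and let R ∈ ℚ[[t, z]] be the unique formal power series with constant coefficient 0 satisfying R = t·z + z·Σ_{2i ∈ D} C(2i−1, i)·R^i. Then for all a, n ∈ ℕ, the coefficient of t^a·z^n in R vanishes unless n ≡ 1 (mod d̄). -/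
open MvPowerSeries

theorem key_aux (D : Finset ℕ)
    (hD : ∀ d ∈ D, Even d ∧ 0 < d)
    (R : MvPowerSeries (Fin 2) ℚ)
    (hR0 : constantCoeff R = 0)
    (hR : R = X 0 * X 1 +
        X 1 * ∑ d ∈ D, (Nat.choose (d - 1) (d / 2) : MvPowerSeries (Fin 2) ℚ) *
          R ^ (d / 2)) :
    ∀ N : ℕ, ∀ m : (Fin 2) →₀ ℕ, m 0 + m 1 ≤ N →
      ¬ (m 1) ≡ 1 [MOD D.gcd (fun d => d / 2)] → coeff m R = 0 := by
  classical
  set g := D.gcd (fun d => d / 2) with hg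
  intro N
  induction N with
  | zero =>
    intro m hm hmod
    -- m = 0, so coeff = constantCoeff = 0
    have h0 : m = 0 := by
      ext i
      fin_cases i
      · show m 0 = 0; omega
      · show m 1 = 0; omega
    rw [h0]
    simpa using hR0
  | succ N ih =>
    intro m hm hmod
    conv_lhs => rw [hR]
    rw [map_add]
    have h1 : coeff m (X 0 * X 1 : MvPowerSeries (Fin 2) ℚ) = 0 := by
      rw [X_def, X_def, monomial_mul_monomial, coeff_monomial]
      split_ifs with h
      · exfalso
        apply hmod
        have : m 1 = 1 := by
          rw [h]
          simp
        rw [this]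
      · rfl
    rw [h1, zero_add, coeff_mul]
    apply Finset.sum_eq_zero
    rintro ⟨p, q⟩ hpq
    rw [Finset.HasAntidiagonal.mem_antidiagonal] at hpq
    dsimp only at hpq
    rw [coeff_X]
    split_ifs with hp
    swap
    · exact zero_mul _
    rw [one_mul]
    subst hp
    -- now q 1 = m 1 - 1, and q 0 + q 1 ≤ N
    have hq1 : m 1 = q 1 + 1 := by
      rw [← hpq, Finsupp.add_apply, Finsupp.single_eq_same]; omega
    have hqN : q 0 + q 1 ≤ N := by
      have h0 : m 0 = q 0 := by rw [← hpq]; simp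
      omega
    rw [map_sum]
    apply Finset.sum_eq_zero
    intro d hd
    have hcast : ((Nat.choose (d - 1) (d / 2) : ℕ) : MvPowerSeries (Fin 2) ℚ)
        = C ((Nat.choose (d - 1) (d / 2) : ℕ) : ℚ) :=
      (map_natCast (C : ℚ →+* MvPowerSeries (Fin 2) ℚ) _).symm
    rw [hcast, coeff_C_mul]
    suffices h : coeff q (R ^ (d / 2)) = 0 by rw [h, mul_zero]
    rw [coeff_pow]
    apply Finset.sum_eq_zero
    intro l hl
    rw [Finset.mem_finsuppAntidiag] at hl
    by_contra hne
    have hfac : ∀ j ∈ Finset.range (d / 2), coeff (l j) R ≠ 0 := by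
      intro j hj h0
      apply hne
      exact Finset.prod_eq_zero hj h0
    -- each factor: (l j) 1 ≡ 1 [MOD g]
    have hcong : ∀ j ∈ Finset.range (d / 2), (l j) 1 ≡ 1 [MOD g] := by
      intro j hj
      by_contra hc
      apply hfac j hj
      apply ih (l j) _ hc
      have hle : l j ≤ q := by
        rw [← hl.1]
        exact Finset.single_le_sum (f := l) (fun i _ => zero_le) hj
      have h0 : (l j) 0 ≤ q 0 := hle 0
      have h1 : (l j) 1 ≤ q 1 := hle 1
      omega
    -- q 1 = sum of (l j) 1 ≡ (d/2) ≡ 0 [MOD g]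
    have hsum : q 1 = ∑ j ∈ Finset.range (d / 2), (l j) 1 := by
      rw [← hl.1]
      exact Finsupp.finset_sum_apply _ _ _
    have hq1cong : q 1 ≡ (d / 2) [MOD g] := by
      rw [hsum]
      show (∑ j ∈ Finset.range (d / 2), (l j) 1) % g = (d / 2) % g
      rw [Finset.sum_nat_mod, Finset.sum_congr rfl hcong, ← Finset.sum_nat_mod]
      simp
    have hq0 : q 1 ≡ 0 [MOD g] :=
      hq1cong.trans (Nat.modEq_zero_iff_dvd.2 (Finset.gcd_dvd hd))
    apply hmod
    rw [hq1]
    simpa using hq0.add_right 1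

/-- Let `D` be a finite nonempty set of even positive integers,
`d̄ = gcd{i : 2i ∈ D}`, and `R ∈ ℚ[[t, z]]` the power series with constant coefficient
`0` satisfying `R = t·z + z·Σ_{2i ∈ D} C(2i−1, i)·R^i` (with `t = X 0`, `z = X 1`).
Then the coefficient of `t^a·z^n` in `R` vanishes unless `n ≡ 1 (mod d̄)`. -/
theorem coeff_vanishes_unless_congruent (D : Finset ℕ)
    (hne : D.Nonempty) (hD : ∀ d ∈ D, Even d ∧ 0 < d)
    (R : MvPowerSeries (Fin 2) ℚ)
    (hR0 : constantCoeff R = 0)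
    (hR : R = X 0 * X 1 +
        X 1 * ∑ d ∈ D, (Nat.choose (d - 1) (d / 2) : MvPowerSeries (Fin 2) ℚ) *
          R ^ (d / 2)) :
    ∀ a n : ℕ, ¬ n ≡ 1 [MOD D.gcd (fun d => d / 2)] →
      coeff (Finsupp.single (0 : Fin 2) a + Finsupp.single (1 : Fin 2) n) R = 0 := by
  intro a n hmod
  apply key_aux D hD R hR0 hR (a + n) _ (by simp) (by simpa using hmod)
end
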